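/- Let p and q be co-prime positive integers. Then there exists M(p,q) ∈ ℕ such that for all co-prime positive integers p', q' with p' > M(p,q), q' > M(p,q) and pq dividing p'q', and for all faithful diffuse probability Radon measures τ and σ on [0,1], there exists an injective unital *-homomorphism φ : Z_{p,q} → Z_{p',q'} with ∫ tr(φ(f)(t)) dσ(t) = ∫ tr(f(t)) dτ(t) for all f ∈ Z_{p,q}. -/

import Mathlib

open MeasureTheory
open scoped ENNReal

noncomputable section

/-- The unit interval `[0,1]` as a type. -/
abbrev 𝕀 : Type := unitInterval

/-- A measure on `[0,1]` is *faithful* if it assigns positive measure to every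
nonempty (relatively) open subset. -/
def Faithful (μ : Measure 𝕀) : Prop :=
  ∀ U : Set 𝕀, IsOpen U → U.Nonempty → 0 < μ U

/-- A measure on `[0,1]` is *diffuse* (atomless) if every singleton has measure zero. -/
def Diffuse (μ : Measure 𝕀) : Prop :=
  ∀ t : 𝕀, μ {t} = 0

open scoped Matrix.Norms.L2Operator ComplexOrder

/-- `n × n` complex matrices. -/
abbrev Mat (n : ℕ) : Type := Matrix (Fin n) (Fin n) ℂ

/-- The C*-algebra `𝔸 n = C([0,1], Mₙ(ℂ))` of continuous matrix-valued functions. -/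
abbrev 𝔸 (n : ℕ) : Type := C(𝕀, Mat n)

/-- The tracial state on `𝔸 n` induced by the measure `μ` on `[0,1]`:
`f ↦ ∫ tr(f t) dμ(t)`, where `tr` is the normalized trace on `Mₙ(ℂ)`. -/
def trInt (n : ℕ) (μ : Measure 𝕀) (f : 𝔸 n) : ℂ :=
  ∫ t, (f t).trace / (n : ℂ) ∂μ

open scoped Kronecker

/-- Evaluation at a point, as a star algebra homomorphism `𝔸 n →⋆ₐ[ℂ] Mat n`. -/
def evalHom (n : ℕ) (t : 𝕀) : 𝔸 n →⋆ₐ[ℂ] Mat n :=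
  { toFun := fun f => f t
    map_one' := rfl
    map_mul' := fun _ _ => rfl
    map_zero' := rfl
    map_add' := fun _ _ => rfl
    commutes' := fun _ => rfl
    map_star' := fun _ => rfl }

/-- `a ↦ a ⊗ 1`, with indices identified via `finProdFinEquiv : Fin p × Fin q ≃ Fin (p*q)`. -/
def lKronFun (p q : ℕ) (a : Mat p) : Mat (p * q) :=
  (a ⊗ₖ (1 : Mat q)).submatrix (⇑finProdFinEquiv.symm) (⇑finProdFinEquiv.symm)

/-- `b ↦ 1 ⊗ b`, with indices identified via `finProdFinEquiv : Fin p × Fin q ≃ Fin (p*q)`. -/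
def rKronFun (p q : ℕ) (b : Mat q) : Mat (p * q) :=
  ((1 : Mat p) ⊗ₖ b).submatrix (⇑finProdFinEquiv.symm) (⇑finProdFinEquiv.symm)

lemma lKronFun_one (p q : ℕ) : lKronFun p q 1 = 1 := by
  unfold lKronFun; rw [Matrix.one_kronecker_one, Matrix.submatrix_one_equiv]

lemma rKronFun_one (p q : ℕ) : rKronFun p q 1 = 1 := by
  unfold rKronFun; rw [Matrix.one_kronecker_one, Matrix.submatrix_one_equiv]

lemma lKronFun_mul (p q : ℕ) (a b : Mat p) :
    lKronFun p q (a * b) = lKronFun p q a * lKronFun p q b := by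
  unfold lKronFun
  rw [Matrix.submatrix_mul_equiv _ _ _ finProdFinEquiv.symm _, ← Matrix.mul_kronecker_mul,
    one_mul]

lemma rKronFun_mul (p q : ℕ) (a b : Mat q) :
    rKronFun p q (a * b) = rKronFun p q a * rKronFun p q b := by
  unfold rKronFun
  rw [Matrix.submatrix_mul_equiv _ _ _ finProdFinEquiv.symm _, ← Matrix.mul_kronecker_mul,
    one_mul]

lemma lKronFun_add (p q : ℕ) (a b : Mat p) :
    lKronFun p q (a + b) = lKronFun p q a + lKronFun p q b := by
  unfold lKronFun; rw [Matrix.add_kronecker, Matrix.submatrix_add]; rfl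

lemma rKronFun_add (p q : ℕ) (a b : Mat q) :
    rKronFun p q (a + b) = rKronFun p q a + rKronFun p q b := by
  unfold rKronFun; rw [Matrix.kronecker_add, Matrix.submatrix_add]; rfl

lemma lKronFun_smul (p q : ℕ) (c : ℂ) (a : Mat p) :
    lKronFun p q (c • a) = c • lKronFun p q a := by
  unfold lKronFun; rw [Matrix.smul_kronecker, Matrix.submatrix_smul]; rfl

lemma rKronFun_smul (p q : ℕ) (c : ℂ) (b : Mat q) :
    rKronFun p q (c • b) = c • rKronFun p q b := by
  unfold rKronFun; rw [Matrix.kronecker_smul, Matrix.submatrix_smul]; rfl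

lemma lKronFun_star (p q : ℕ) (a : Mat p) :
    lKronFun p q (star a) = star (lKronFun p q a) := by
  ext x y
  simp [lKronFun, Matrix.submatrix_apply, Matrix.star_apply, Matrix.kroneckerMap_apply,
    Matrix.one_apply, star_mul', apply_ite, eq_comm]
  split_ifs with h <;> tauto

lemma rKronFun_star (p q : ℕ) (b : Mat q) :
    rKronFun p q (star b) = star (rKronFun p q b) := by
  ext x y
  simp [rKronFun, Matrix.submatrix_apply, Matrix.star_apply, Matrix.kroneckerMap_apply,
    Matrix.one_apply, star_mul', apply_ite, eq_comm]
  split_ifs with h <;> tauto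

/-- The unital star-algebra embedding `M_p(ℂ) → M_{pq}(ℂ)`, `a ↦ a ⊗ 1`. -/
def lKron (p q : ℕ) : Mat p →⋆ₐ[ℂ] Mat (p * q) :=
  { toFun := lKronFun p q
    map_one' := lKronFun_one p q
    map_mul' := lKronFun_mul p q
    map_zero' := by
      show lKronFun p q 0 = 0
      have := lKronFun_smul p q 0 1; simpa using this
    map_add' := lKronFun_add p q
    commutes' := fun c => by
      show lKronFun p q (algebraMap ℂ (Mat p) c) = algebraMap ℂ (Mat (p * q)) c
      rw [Algebra.algebraMap_eq_smul_one, Algebra.algebraMap_eq_smul_one,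
        lKronFun_smul, lKronFun_one]
    map_star' := fun a => by
      show lKronFun p q (star a) = star (lKronFun p q a)
      exact lKronFun_star p q a }

/-- The unital star-algebra embedding `M_q(ℂ) → M_{pq}(ℂ)`, `b ↦ 1 ⊗ b`. -/
def rKron (p q : ℕ) : Mat q →⋆ₐ[ℂ] Mat (p * q) :=
  { toFun := rKronFun p q
    map_one' := rKronFun_one p q
    map_mul' := rKronFun_mul p q
    map_zero' := by
      show rKronFun p q 0 = 0
      have := rKronFun_smul p q 0 1; simpa using this
    map_add' := rKronFun_add p q
    commutes' := fun c => by
      show rKronFun p q (algebraMap ℂ (Mat q) c) = algebraMap ℂ (Mat (p * q)) c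
      rw [Algebra.algebraMap_eq_smul_one, Algebra.algebraMap_eq_smul_one,
        rKronFun_smul, rKronFun_one]
    map_star' := fun b => by
      show rKronFun p q (star b) = star (rKronFun p q b)
      exact rKronFun_star p q b }

/-- The dimension drop algebra `Z_{p,q}`: the star subalgebra of `C([0,1], M_{pq}(ℂ))`
consisting of those `f` with `f 0 ∈ M_p(ℂ) ⊗ 1` and `f 1 ∈ 1 ⊗ M_q(ℂ)`. -/
def Zpq (p q : ℕ) : StarSubalgebra ℂ (𝔸 (p * q)) :=
  ((lKron p q).range.comap (evalHom (p * q) 0)) ⊓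
    ((rKron p q).range.comap (evalHom (p * q) 1))

/-- `mult k ξ s t` is the number of indices `i` with `ξ i s = t`. -/
def mult (k : ℕ) (ξ : Fin k → C(𝕀, 𝕀)) (s t : 𝕀) : ℕ :=
  Set.ncard {i : Fin k | ξ i s = t}


open scoped Matrix


lemma exists_split (p q q' p' k : ℕ) (hp : 0 < p) (hq : 0 < q) (hq' : 0 < q') (hp' : 0 < p')
    (hpq : Nat.Coprime p q) (h1 : p * q * k = p' * q') (hk : q' ≤ k) :
    ∃ a, a ≤ k ∧ q' ∣ a * q ∧ q' ∣ (k - a) * p := by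
  set g := Nat.gcd q q' with hg
  set h := Nat.gcd p q' with hh
  have hgpos : 0 < g := Nat.gcd_pos_of_pos_left _ hq
  have hhpos : 0 < h := Nat.gcd_pos_of_pos_left _ hp
  have hgq' : g ∣ q' := Nat.gcd_dvd_right _ _
  have hhq' : h ∣ q' := Nat.gcd_dvd_right _ _
  have hgq : g ∣ q := Nat.gcd_dvd_left _ _
  have hhp : h ∣ p := Nat.gcd_dvd_left _ _
  have hcop_gh : Nat.Coprime h g :=
    Nat.Coprime.coprime_dvd_right hgq (Nat.Coprime.coprime_dvd_left hhp hpq)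
  have hghq' : g * h ∣ q' := Nat.Coprime.mul_dvd_of_dvd_of_dvd hcop_gh.symm hgq' hhq'
  set w := q' / (g * h) with hw
  have hwq' : w * (g * h) = q' := Nat.div_mul_cancel hghq'
  have hwpos : 0 < w := Nat.div_pos (Nat.le_of_dvd hq' hghq') (Nat.mul_pos hgpos hhpos)
  set p₁ := p / h with hp₁
  set q₁ := q / g with hq₁
  have hpp : h * p₁ = p := Nat.mul_div_cancel' hhp
  have hqq : g * q₁ = q := Nat.mul_div_cancel' hgq
  -- coprimality facts
  have hcop1 : Nat.Coprime (p / h) (q' / h) := Nat.coprime_div_gcd_div_gcd hhpos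
  have hcop2 : Nat.Coprime (q / g) (q' / g) := Nat.coprime_div_gcd_div_gcd hgpos
  have e1 : q' / h = w * g := Nat.div_eq_of_eq_mul_left hhpos (by rw [← hwq']; ring)
  have e2 : q' / g = w * h := Nat.div_eq_of_eq_mul_left hgpos (by rw [← hwq']; ring)
  have hwdvd1 : w ∣ q' / h := ⟨g, e1⟩
  have hwdvd2 : w ∣ q' / g := ⟨h, e2⟩
  have hcopwp : Nat.Coprime w p₁ := Nat.Coprime.coprime_dvd_left hwdvd1 hcop1.symm
  have hcopwq : Nat.Coprime w q₁ := Nat.Coprime.coprime_dvd_left hwdvd2 hcop2.symm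
  -- w ∣ k
  have hkey : k * (p₁ * q₁) = p' * w := by
    have h2 : (h * p₁) * (g * q₁) * k = p' * (w * (g * h)) := by rw [hpp, hqq, hwq', h1]
    have hgh : 0 < g * h := Nat.mul_pos hgpos hhpos
    apply Nat.eq_of_mul_eq_mul_right hgh
    calc k * (p₁ * q₁) * (g * h) = h * p₁ * (g * q₁) * k := by ring
    _ = p' * (w * (g * h)) := h2
    _ = p' * w * (g * h) := by ring
  have hwk : w ∣ k := by
    have : w ∣ k * (p₁ * q₁) := ⟨p', by rw [hkey, mul_comm]⟩
    exact (Nat.Coprime.dvd_of_dvd_mul_right (hcopwp.mul_right hcopwq) this)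
  set κ := k / w with hκ
  have hκk : w * κ = k := Nat.mul_div_cancel' hwk
  -- CRT
  obtain ⟨c, hc1, hc2⟩ := Nat.chineseRemainder hcop_gh 0 κ
  set α := c % (g * h) with hα
  have hαlt : α < g * h := Nat.mod_lt _ (Nat.mul_pos hgpos hhpos)
  have hα1 : α ≡ 0 [MOD h] := ((Nat.mod_modEq c (g*h)).of_dvd ⟨g, by ring⟩).trans hc1
  have hα2 : α ≡ κ [MOD g] := ((Nat.mod_modEq c (g*h)).of_dvd ⟨h, rfl⟩).trans hc2
  have hhα : h ∣ α := (Nat.modEq_zero_iff_dvd).mp hα1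
  have hκgh : g * h ≤ κ := by
    have : w * (g * h) ≤ w * κ := by rw [hwq', hκk]; exact hk
    exact Nat.le_of_mul_le_mul_left this hwpos
  have hακ : α ≤ κ := le_trans (le_of_lt hαlt) hκgh
  have hgκα : g ∣ κ - α := (Nat.modEq_iff_dvd' hακ).mp hα2
  refine ⟨w * α, ?_, ?_, ?_⟩
  · calc w * α ≤ w * κ := Nat.mul_le_mul_left w hακ
    _ = k := hκk
  · -- q' ∣ w * α * q
    obtain ⟨α', hα'⟩ := hhα
    refine ⟨α' * q₁, ?_⟩
    rw [← hwq', ← hqq, hα']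
    ring
  · -- q' ∣ (k - w*α) * p
    have : k - w * α = w * (κ - α) := by
      rw [Nat.mul_sub, hκk]
    obtain ⟨β, hβ⟩ := hgκα
    refine ⟨β * p₁, ?_⟩
    rw [this, ← hwq', ← hpp, hβ]
    ring



def permMat (N : ℕ) (π : Equiv.Perm (Fin N)) : Mat N :=
  Matrix.of fun i j => if π j = i then 1 else 0

lemma permMat_one (N : ℕ) : permMat N 1 = 1 := by
  ext i j
  simp [permMat, Matrix.one_apply, eq_comm]

lemma permMat_mul (N : ℕ) (π₁ π₂ : Equiv.Perm (Fin N)) :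
    permMat N (π₁ * π₂) = permMat N π₁ * permMat N π₂ := by
  ext i j
  simp only [permMat, Matrix.mul_apply, Matrix.of_apply]
  rw [Finset.sum_eq_single (π₂ j)]
  · simp [Equiv.Perm.mul_apply]
    split_ifs <;> simp_all
  · intro b _ hb; simp [hb, if_neg (Ne.symm hb)]
  · simp

lemma permMat_conjT (N : ℕ) (π : Equiv.Perm (Fin N)) :
    (permMat N π)ᴴ = permMat N π⁻¹ := by
  ext i j
  simp only [permMat, Matrix.conjTranspose_apply, Matrix.of_apply]
  by_cases h : π i = j
  · rw [if_pos h, if_pos (by rw [← h]; simp)]; simp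
  · rw [if_neg h, if_neg (by intro hh; apply h; rw [← hh]; simp)]; simp

lemma permMat_conj (N : ℕ) (π : Equiv.Perm (Fin N)) (B : Mat N) :
    permMat N π * B * (permMat N π)ᴴ = B.submatrix ⇑π.symm ⇑π.symm := by
  ext i j
  rw [permMat_conjT]
  simp only [Matrix.mul_apply, permMat, Matrix.of_apply, Matrix.submatrix_apply,
    mul_ite, mul_one, mul_zero, ite_mul, one_mul, zero_mul]
  rw [Finset.sum_ite_eq]
  simp only [Finset.mem_univ, if_true]
  simp only [show ∀ y, (π y = i) ↔ (y = π.symm i) from fun y => by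
    constructor
    · intro h; rw [← h]; simp
    · intro h; rw [h]; simp]
  rw [Finset.sum_ite_eq']
  simp only [Finset.mem_univ, if_true]
  rfl

lemma permMat_mul_conjT (N : ℕ) (π : Equiv.Perm (Fin N)) :
    permMat N π * (permMat N π)ᴴ = 1 := by
  rw [permMat_conjT, ← permMat_mul, mul_inv_cancel, permMat_one]

lemma permMat_conjT_mul (N : ℕ) (π : Equiv.Perm (Fin N)) :
    (permMat N π)ᴴ * permMat N π = 1 := by
  rw [permMat_conjT, ← permMat_mul, inv_mul_cancel, permMat_one]

/-- swap path coefficients -/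
private def zc (t : ℝ) : ℂ := (1 + Complex.exp (Real.pi * t * Complex.I)) / 2
private def wc (t : ℝ) : ℂ := (1 - Complex.exp (Real.pi * t * Complex.I)) / 2

private lemma zc_cont : Continuous zc := by
  unfold zc; fun_prop

private lemma wc_cont : Continuous wc := by
  unfold wc; fun_prop

private lemma exp_star (t : ℝ) :
    Complex.exp (Real.pi * t * Complex.I) * star (Complex.exp (Real.pi * t * Complex.I)) = 1 := by
  have : star (Complex.exp (Real.pi * t * Complex.I))
      = Complex.exp (-(Real.pi * t * Complex.I)) := by
    rw [show star (Complex.exp (Real.pi * t * Complex.I))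
        = (starRingEnd ℂ) (Complex.exp (Real.pi * t * Complex.I)) from rfl]
    rw [← Complex.exp_conj]
    congr 1
    simp [Complex.ext_iff]
  rw [this, ← Complex.exp_add]
  simp

private lemma zc_wc_norm (t : ℝ) : zc t * star (zc t) + wc t * star (wc t) = 1 := by
  have h := exp_star t
  set u := Complex.exp (Real.pi * t * Complex.I)
  simp only [zc, wc, star_div₀, star_add, star_sub, star_one,
    show ((2:ℂ)⁻¹) = 2⁻¹ from rfl]
  field_simp
  simp only [star_ofNat]
  linear_combination 2 * h

private lemma zc_wc_cross (t : ℝ) : zc t * star (wc t) + wc t * star (zc t) = 0 := by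
  have h := exp_star t
  set u := Complex.exp (Real.pi * t * Complex.I)
  simp only [zc, wc, star_div₀, star_add, star_sub, star_one]
  field_simp
  linear_combination (-2) * h

private lemma zc_zero : zc 0 = 1 := by simp [zc]
private lemma wc_zero : wc 0 = 0 := by simp [wc]
private lemma exp_at_one : Complex.exp (Real.pi * (1:ℝ) * Complex.I) = -1 := by
  rw [show ((Real.pi : ℂ) * ((1:ℝ) : ℂ) * Complex.I) = Real.pi * Complex.I by push_cast; ring]
  exact Complex.exp_pi_mul_I
private lemma zc_one : zc 1 = 0 := by rw [zc, exp_at_one]; ring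
private lemma wc_one : wc 1 = 1 := by rw [wc, exp_at_one]; ring

lemma exists_path_swap (N : ℕ) (x y : Fin N) (hxy : x ≠ y) :
    ∃ γ : ℝ → Mat N, Continuous γ ∧ γ 0 = 1 ∧ γ 1 = permMat N (Equiv.swap x y) ∧
      ∀ t, γ t * (γ t)ᴴ = 1 ∧ (γ t)ᴴ * γ t = 1 := by
  set P := permMat N (Equiv.swap x y) with hP
  have hPH : Pᴴ = P := by
    rw [hP, permMat_conjT, Equiv.swap_inv]
  have hPP : P * P = 1 := by
    rw [hP, ← permMat_mul, Equiv.swap_mul_self, permMat_one]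
  have e1 : ∀ t, star (zc t) * zc t + star (wc t) * wc t = 1 := fun t => by
    rw [mul_comm (star (zc t)), mul_comm (star (wc t))]; exact zc_wc_norm t
  have e1' : ∀ t, zc t * star (zc t) + wc t * star (wc t) = 1 := zc_wc_norm
  have e2 : ∀ t, star (zc t) * wc t + star (wc t) * zc t = 0 := fun t => by
    rw [mul_comm (star (zc t)), mul_comm (star (wc t)), add_comm]; exact zc_wc_cross t
  have e2' : ∀ t, zc t * star (wc t) + wc t * star (zc t) = 0 := zc_wc_cross
  refine ⟨fun t => zc t • 1 + wc t • P, ?_, ?_, ?_, ?_⟩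
  · exact (zc_cont.smul continuous_const).add (wc_cont.smul continuous_const)
  · simp [zc_zero, wc_zero]
  · simp [zc_one, wc_one]
  · intro t
    constructor
    · rw [Matrix.conjTranspose_add, Matrix.conjTranspose_smul, Matrix.conjTranspose_smul,
        Matrix.conjTranspose_one, hPH]
      rw [add_mul, mul_add, mul_add]
      simp only [Matrix.smul_mul, Matrix.mul_smul, one_mul, mul_one, smul_smul, hPP]
      calc (star (zc t) * zc t) • (1 : Mat N) + (star (wc t) * zc t) • P +
            ((star (zc t) * wc t) • P + (star (wc t) * wc t) • (1 : Mat N))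
          = (star (zc t) * zc t + star (wc t) * wc t) • (1 : Mat N)
            + (star (zc t) * wc t + star (wc t) * zc t) • P := by
            rw [add_smul, add_smul]; abel
        _ = 1 := by rw [e1, e2, one_smul, zero_smul, add_zero]
    · rw [Matrix.conjTranspose_add, Matrix.conjTranspose_smul, Matrix.conjTranspose_smul,
        Matrix.conjTranspose_one, hPH]
      rw [add_mul, mul_add, mul_add]
      simp only [Matrix.smul_mul, Matrix.mul_smul, one_mul, mul_one, smul_smul, hPP]
      calc (zc t * star (zc t)) • (1 : Mat N) + (wc t * star (zc t)) • P +
            ((zc t * star (wc t)) • P + (wc t * star (wc t)) • (1 : Mat N))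
          = (zc t * star (zc t) + wc t * star (wc t)) • (1 : Mat N)
            + (zc t * star (wc t) + wc t * star (zc t)) • P := by
            rw [add_smul, add_smul]; abel
        _ = 1 := by rw [e1', e2', one_smul, zero_smul, add_zero]

lemma exists_path_perm (N : ℕ) (π : Equiv.Perm (Fin N)) :
    ∃ γ : ℝ → Mat N, Continuous γ ∧ γ 0 = 1 ∧ γ 1 = permMat N π ∧
      ∀ t, γ t * (γ t)ᴴ = 1 ∧ (γ t)ᴴ * γ t = 1 := by
  refine Equiv.Perm.swap_induction_on π
    ⟨fun _ => 1, continuous_const, rfl, (permMat_one N).symm, fun t => by simp⟩ ?_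
  intro f x y hxy ih
  · obtain ⟨γf, hc, h0, h1, hu⟩ := ih
    obtain ⟨γs, hc', h0', h1', hu'⟩ := exists_path_swap N x y hxy
    refine ⟨fun t => γs t * γf t, hc'.matrix_mul hc, by simp [h0, h0'], ?_, ?_⟩
    · show γs 1 * γf 1 = permMat N (Equiv.swap x y * f)
      rw [h1, h1', permMat_mul]
    · intro t
      constructor
      · rw [Matrix.conjTranspose_mul]
        calc γs t * γf t * ((γf t)ᴴ * (γs t)ᴴ) = γs t * (γf t * (γf t)ᴴ) * (γs t)ᴴ := by
              noncomm_ring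
        _ = 1 := by rw [(hu t).1, mul_one, (hu' t).1]
      · rw [Matrix.conjTranspose_mul]
        calc (γf t)ᴴ * (γs t)ᴴ * (γs t * γf t) = (γf t)ᴴ * ((γs t)ᴴ * γs t) * γf t := by
              noncomm_ring
        _ = 1 := by rw [(hu' t).2, mul_one, (hu t).2]


-- sorting equivalence
lemma exists_sort {k : ℕ} (c : Fin k → Bool) (a b : ℕ)
    (ha : Fintype.card {i // c i = false} = a) (hb : Fintype.card {i // c i = true} = b) :
    ∃ e : Fin a ⊕ Fin b ≃ Fin k,
      (∀ j, c (e (Sum.inl j)) = false) ∧ (∀ j, c (e (Sum.inr j)) = true) := by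
  have hb' : Fintype.card {i // ¬ (c i = false)} = b := by
    rw [← hb]
    exact Fintype.card_congr (Equiv.subtypeEquivRight (fun i => by
      cases c i <;> simp))
  refine ⟨(Equiv.sumCongr (Fintype.equivFinOfCardEq ha).symm
      (Fintype.equivFinOfCardEq hb').symm).trans
      (Equiv.sumCompl (fun i => c i = false)), fun j => ?_, fun j => ?_⟩
  · simp only [Equiv.trans_apply, Equiv.sumCongr_apply, Sum.map_inl]
    rw [Equiv.sumCompl_apply_inl]
    exact ((Fintype.equivFinOfCardEq ha).symm j).2
  · simp only [Equiv.trans_apply, Equiv.sumCongr_apply, Sum.map_inr]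
    rw [Equiv.sumCompl_apply_inr]
    have := ((Fintype.equivFinOfCardEq hb').symm j).2
    simpa using this

lemma keyL (p q p' q' k m n : ℕ) (c : Fin k → Bool)
    (hm : q * Fintype.card {i // c i = false} = m * q')
    (hn : p * Fintype.card {i // c i = true} = n * q')
    (hp' : p * m + q * n = p') :
    ∃ Θ : Fin (p' * q') ≃ Fin (p * q) × Fin k, ∀ (x : Mat p) (y : Mat q), ∃ ρ : Mat p',
      ((Matrix.blockDiagonal fun i =>
          if c i then rKronFun p q y else lKronFun p q x).submatrix Θ Θ)
        = lKronFun p' q' ρ := by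
  classical
  set a := Fintype.card {i // c i = false} with hadef
  set b := Fintype.card {i // c i = true} with hbdef
  obtain ⟨es, hes1, hes2⟩ := exists_sort c a b rfl rfl
  have heA : Fintype.card (Fin q × Fin a) = Fintype.card (Fin m × Fin q') := by
    simp [Fintype.card_prod, hm]
  have heB : Fintype.card (Fin p × Fin b) = Fintype.card (Fin n × Fin q') := by
    simp [Fintype.card_prod, hn]
  have hE : Fintype.card ((Fin p × Fin m) ⊕ (Fin q × Fin n)) = Fintype.card (Fin p') := by
    simp [Fintype.card_prod, Fintype.card_sum, ← hp']
  set eA : Fin q × Fin a ≃ Fin m × Fin q' := Fintype.equivOfCardEq heA with heAdef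
  set eB : Fin p × Fin b ≃ Fin n × Fin q' := Fintype.equivOfCardEq heB with heBdef
  set E : (Fin p × Fin m) ⊕ (Fin q × Fin n) ≃ Fin p' := Fintype.equivOfCardEq hE with hEdef
  set C : Fin (p * q) × Fin k ≃ Fin p' × Fin q' :=
    (Equiv.prodCongr finProdFinEquiv.symm es.symm).trans <|
    (Equiv.prodSumDistrib _ _ _).trans <|
    (Equiv.sumCongr
      ((Equiv.prodAssoc _ _ _).trans ((Equiv.prodCongr (Equiv.refl (Fin p)) eA).trans
        (Equiv.prodAssoc _ _ _).symm))
      (((Equiv.prodCongr (Equiv.prodComm (Fin p) (Fin q)) (Equiv.refl (Fin b))).trans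
        (Equiv.prodAssoc _ _ _)).trans ((Equiv.prodCongr (Equiv.refl (Fin q)) eB).trans
        (Equiv.prodAssoc _ _ _).symm))).trans <|
    (Equiv.sumProdDistrib _ _ _).symm.trans (Equiv.prodCongr E (Equiv.refl _)) with hCdef
  refine ⟨finProdFinEquiv.symm.trans C.symm, fun x y => ?_⟩
  set ρ : Mat p' := (Matrix.fromBlocks (x ⊗ₖ (1 : Mat m)) 0 0 (y ⊗ₖ (1 : Mat n))).submatrix
    ⇑E.symm ⇑E.symm with hρdef
  refine ⟨ρ, ?_⟩
  -- main entry computation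
  have main : ∀ (r r' : Fin p) (s s' : Fin q) (j j' : Fin a ⊕ Fin b),
      (Matrix.blockDiagonal fun i => if c i then rKronFun p q y else lKronFun p q x)
        (finProdFinEquiv (r, s), es j) (finProdFinEquiv (r', s'), es j')
      = ((ρ ⊗ₖ (1 : Mat q')) (C (finProdFinEquiv (r, s), es j))
          (C (finProdFinEquiv (r', s'), es j'))) := by
    intro r r' s s' j j'
    rcases j with ja | jb <;> rcases j' with ja' | jb'
    · -- L/L case
      rw [Matrix.blockDiagonal_apply]
      simp only [hes1, Bool.false_eq_true, if_false]
      have hC : ∀ (r : Fin p) (s : Fin q) (ja : Fin a),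
          C (finProdFinEquiv (r, s), es (Sum.inl ja))
          = (E (Sum.inl (r, (eA (s, ja)).1)), (eA (s, ja)).2) := by
        intro r s ja
        simp [hCdef, Equiv.prodSumDistrib]
      rw [hC, hC]
      simp only [Matrix.kroneckerMap_apply, hρdef, Matrix.submatrix_apply,
        Equiv.symm_apply_apply, Matrix.fromBlocks_apply₁₁]
      by_cases hj : es (Sum.inl ja) = es (Sum.inl ja')
      · have hja : ja = ja' := by
          have := es.injective hj; simpa using this
        subst hja
        rw [if_pos rfl]
        show lKronFun p q x (finProdFinEquiv (r, s)) (finProdFinEquiv (r', s')) = _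
        rw [lKronFun]
        simp only [Matrix.submatrix_apply, Equiv.symm_apply_apply,
          Matrix.kroneckerMap_apply, Matrix.one_apply]
        by_cases hs : s = s'
        · subst hs
          simp [Matrix.one_apply]
        · have : eA (s, ja) ≠ eA (s', ja) := fun hcon => hs (by
            have := eA.injective hcon; exact (Prod.mk.injEq _ _ _ _).mp this |>.1)
          rw [if_neg hs]
          rcases Prod.mk.injEq (eA (s, ja)).1 (eA (s, ja)).2 (eA (s', ja)).1 (eA (s', ja)).2 with _
          by_cases h1 : (eA (s, ja)).1 = (eA (s', ja)).1
          · have h2 : (eA (s, ja)).2 ≠ (eA (s', ja)).2 := fun h2 => this (Prod.ext h1 h2)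
            simp [Matrix.one_apply, h2, mul_zero]
          · simp [Matrix.one_apply, h1]
      · have hja : ja ≠ ja' := fun hcon => hj (by rw [hcon])
        rw [if_neg hj]
        have : eA (s, ja) ≠ eA (s', ja') := fun hcon => hja (by
          have := eA.injective hcon; exact ((Prod.mk.injEq _ _ _ _).mp this).2)
        by_cases h1 : (eA (s, ja)).1 = (eA (s', ja')).1
        · have h2 : (eA (s, ja)).2 ≠ (eA (s', ja')).2 := fun h2 => this (Prod.ext h1 h2)
          simp [Matrix.one_apply, h2, mul_zero]
        · simp [Matrix.one_apply, h1]
    · -- L/R case: zero on both sides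
      rw [Matrix.blockDiagonal_apply]
      have hj : es (Sum.inl ja) ≠ es (Sum.inr jb') := fun hcon => by
        have := es.injective hcon; simp at this
      rw [if_neg hj]
      have hCl : C (finProdFinEquiv (r, s), es (Sum.inl ja))
          = (E (Sum.inl (r, (eA (s, ja)).1)), (eA (s, ja)).2) := by
        simp [hCdef, Equiv.prodSumDistrib]
      have hCr : C (finProdFinEquiv (r', s'), es (Sum.inr jb'))
          = (E (Sum.inr (s', (eB (r', jb')).1)), (eB (r', jb')).2) := by
        simp [hCdef, Equiv.prodSumDistrib]
      rw [hCl, hCr]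
      simp [hρdef, Matrix.kroneckerMap_apply]
    · -- R/L case
      rw [Matrix.blockDiagonal_apply]
      have hj : es (Sum.inr jb) ≠ es (Sum.inl ja') := fun hcon => by
        have := es.injective hcon; simp at this
      rw [if_neg hj]
      have hCl : C (finProdFinEquiv (r, s), es (Sum.inr jb))
          = (E (Sum.inr (s, (eB (r, jb)).1)), (eB (r, jb)).2) := by
        simp [hCdef, Equiv.prodSumDistrib]
      have hCr : C (finProdFinEquiv (r', s'), es (Sum.inl ja'))
          = (E (Sum.inl (r', (eA (s', ja')).1)), (eA (s', ja')).2) := by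
        simp [hCdef, Equiv.prodSumDistrib]
      rw [hCl, hCr]
      simp [hρdef, Matrix.kroneckerMap_apply]
    · -- R/R case
      rw [Matrix.blockDiagonal_apply]
      simp only [hes2, if_true]
      have hC : ∀ (r : Fin p) (s : Fin q) (jb : Fin b),
          C (finProdFinEquiv (r, s), es (Sum.inr jb))
          = (E (Sum.inr (s, (eB (r, jb)).1)), (eB (r, jb)).2) := by
        intro r s jb
        simp [hCdef, Equiv.prodSumDistrib]
      rw [hC, hC]
      simp only [Matrix.kroneckerMap_apply, hρdef, Matrix.submatrix_apply,
        Equiv.symm_apply_apply, Matrix.fromBlocks_apply₂₂]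
      by_cases hj : es (Sum.inr jb) = es (Sum.inr jb')
      · have hjb : jb = jb' := by
          have := es.injective hj; simpa using this
        subst hjb
        rw [if_pos rfl]
        show rKronFun p q y (finProdFinEquiv (r, s)) (finProdFinEquiv (r', s')) = _
        rw [rKronFun]
        simp only [Matrix.submatrix_apply, Equiv.symm_apply_apply,
          Matrix.kroneckerMap_apply, Matrix.one_apply]
        by_cases hr : r = r'
        · subst hr
          simp [Matrix.one_apply]
        · have : eB (r, jb) ≠ eB (r', jb) := fun hcon => hr (by
            have := eB.injective hcon; exact ((Prod.mk.injEq _ _ _ _).mp this).1)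
          rw [if_neg hr]
          by_cases h1 : (eB (r, jb)).1 = (eB (r', jb)).1
          · have h2 : (eB (r, jb)).2 ≠ (eB (r', jb)).2 := fun h2 => this (Prod.ext h1 h2)
            simp [Matrix.one_apply, h2, mul_zero]
          · simp [Matrix.one_apply, h1]
      · have hjb : jb ≠ jb' := fun hcon => hj (by rw [hcon])
        rw [if_neg hj]
        have : eB (r, jb) ≠ eB (r', jb') := fun hcon => hjb (by
          have := eB.injective hcon; exact ((Prod.mk.injEq _ _ _ _).mp this).2)
        by_cases h1 : (eB (r, jb)).1 = (eB (r', jb')).1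
        · have h2 : (eB (r, jb)).2 ≠ (eB (r', jb')).2 := fun h2 => this (Prod.ext h1 h2)
          simp [Matrix.one_apply, h2, mul_zero]
        · simp [Matrix.one_apply, h1]
  -- conclude
  ext w z
  simp only [Matrix.submatrix_apply, lKronFun]
  have hw1 : finProdFinEquiv.symm w = C ((finProdFinEquiv.symm.trans C.symm) w) := by simp
  have hz1 : finProdFinEquiv.symm z = C ((finProdFinEquiv.symm.trans C.symm) z) := by simp
  rw [hw1, hz1]
  set ζ := (finProdFinEquiv.symm.trans C.symm) w with hζ
  set ζ' := (finProdFinEquiv.symm.trans C.symm) z with hζ'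
  obtain ⟨rs, hrs⟩ := finProdFinEquiv.surjective ζ.1
  obtain ⟨j, hj⟩ := es.surjective ζ.2
  obtain ⟨rs', hrs'⟩ := finProdFinEquiv.surjective ζ'.1
  obtain ⟨j', hj'⟩ := es.surjective ζ'.2
  have hζeq : ζ = (finProdFinEquiv rs, es j) := by rw [hrs, hj]
  have hζeq' : ζ' = (finProdFinEquiv rs', es j') := by rw [hrs', hj']
  rw [hζeq, hζeq']
  exact main rs.1 rs'.1 rs.2 rs'.2 j j'

lemma keyR (p q p' q' k m n : ℕ) (c : Fin k → Bool)
    (hm : q * Fintype.card {i // c i = false} = m * p')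
    (hn : p * Fintype.card {i // c i = true} = n * p')
    (hq' : p * m + q * n = q') :
    ∃ Θ : Fin (p' * q') ≃ Fin (p * q) × Fin k, ∀ (x : Mat p) (y : Mat q), ∃ ρ : Mat q',
      ((Matrix.blockDiagonal fun i =>
          if c i then rKronFun p q y else lKronFun p q x).submatrix Θ Θ)
        = rKronFun p' q' ρ := by
  classical
  set a := Fintype.card {i // c i = false} with hadef
  set b := Fintype.card {i // c i = true} with hbdef
  obtain ⟨es, hes1, hes2⟩ := exists_sort c a b rfl rfl
  have heA : Fintype.card (Fin q × Fin a) = Fintype.card (Fin m × Fin p') := by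
    simp [Fintype.card_prod, hm]
  have heB : Fintype.card (Fin p × Fin b) = Fintype.card (Fin n × Fin p') := by
    simp [Fintype.card_prod, hn]
  have hE : Fintype.card ((Fin p × Fin m) ⊕ (Fin q × Fin n)) = Fintype.card (Fin q') := by
    simp [Fintype.card_prod, Fintype.card_sum, ← hq']
  set eA : Fin q × Fin a ≃ Fin m × Fin p' := Fintype.equivOfCardEq heA with heAdef
  set eB : Fin p × Fin b ≃ Fin n × Fin p' := Fintype.equivOfCardEq heB with heBdef
  set E : (Fin p × Fin m) ⊕ (Fin q × Fin n) ≃ Fin q' := Fintype.equivOfCardEq hE with hEdef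
  set C : Fin (p * q) × Fin k ≃ Fin p' × Fin q' :=
    (Equiv.prodCongr finProdFinEquiv.symm es.symm).trans <|
    (Equiv.prodSumDistrib _ _ _).trans <|
    (Equiv.sumCongr
      ((Equiv.prodAssoc _ _ _).trans ((Equiv.prodCongr (Equiv.refl (Fin p)) eA).trans
        (Equiv.prodAssoc _ _ _).symm))
      (((Equiv.prodCongr (Equiv.prodComm (Fin p) (Fin q)) (Equiv.refl (Fin b))).trans
        (Equiv.prodAssoc _ _ _)).trans ((Equiv.prodCongr (Equiv.refl (Fin q)) eB).trans
        (Equiv.prodAssoc _ _ _).symm))).trans <|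
    (Equiv.sumProdDistrib _ _ _).symm.trans ((Equiv.prodCongr E (Equiv.refl _)).trans (Equiv.prodComm (Fin q') (Fin p'))) with hCdef
  refine ⟨finProdFinEquiv.symm.trans C.symm, fun x y => ?_⟩
  set ρ : Mat q' := (Matrix.fromBlocks (x ⊗ₖ (1 : Mat m)) 0 0 (y ⊗ₖ (1 : Mat n))).submatrix
    ⇑E.symm ⇑E.symm with hρdef
  refine ⟨ρ, ?_⟩
  -- main entry computation
  have main : ∀ (r r' : Fin p) (s s' : Fin q) (j j' : Fin a ⊕ Fin b),
      (Matrix.blockDiagonal fun i => if c i then rKronFun p q y else lKronFun p q x)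
        (finProdFinEquiv (r, s), es j) (finProdFinEquiv (r', s'), es j')
      = (((1 : Mat p') ⊗ₖ ρ) (C (finProdFinEquiv (r, s), es j))
          (C (finProdFinEquiv (r', s'), es j'))) := by
    intro r r' s s' j j'
    rcases j with ja | jb <;> rcases j' with ja' | jb'
    · -- L/L case
      rw [Matrix.blockDiagonal_apply]
      simp only [hes1, Bool.false_eq_true, if_false]
      have hC : ∀ (r : Fin p) (s : Fin q) (ja : Fin a),
          C (finProdFinEquiv (r, s), es (Sum.inl ja))
          = ((eA (s, ja)).2, E (Sum.inl (r, (eA (s, ja)).1))) := by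
        intro r s ja
        simp [hCdef, Equiv.prodSumDistrib]
      rw [hC, hC]
      simp only [Matrix.kroneckerMap_apply, hρdef, Matrix.submatrix_apply,
        Equiv.symm_apply_apply, Matrix.fromBlocks_apply₁₁]
      by_cases hj : es (Sum.inl ja) = es (Sum.inl ja')
      · have hja : ja = ja' := by
          have := es.injective hj; simpa using this
        subst hja
        rw [if_pos rfl]
        show lKronFun p q x (finProdFinEquiv (r, s)) (finProdFinEquiv (r', s')) = _
        rw [lKronFun]
        simp only [Matrix.submatrix_apply, Equiv.symm_apply_apply,
          Matrix.kroneckerMap_apply, Matrix.one_apply]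
        by_cases hs : s = s'
        · subst hs
          simp [Matrix.one_apply]
        · have : eA (s, ja) ≠ eA (s', ja) := fun hcon => hs (by
            have := eA.injective hcon; exact (Prod.mk.injEq _ _ _ _).mp this |>.1)
          rw [if_neg hs]
          rcases Prod.mk.injEq (eA (s, ja)).1 (eA (s, ja)).2 (eA (s', ja)).1 (eA (s', ja)).2 with _
          by_cases h1 : (eA (s, ja)).1 = (eA (s', ja)).1
          · have h2 : (eA (s, ja)).2 ≠ (eA (s', ja)).2 := fun h2 => this (Prod.ext h1 h2)
            simp [Matrix.one_apply, h2, mul_zero]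
          · simp [Matrix.one_apply, h1]
      · have hja : ja ≠ ja' := fun hcon => hj (by rw [hcon])
        rw [if_neg hj]
        have : eA (s, ja) ≠ eA (s', ja') := fun hcon => hja (by
          have := eA.injective hcon; exact ((Prod.mk.injEq _ _ _ _).mp this).2)
        by_cases h1 : (eA (s, ja)).1 = (eA (s', ja')).1
        · have h2 : (eA (s, ja)).2 ≠ (eA (s', ja')).2 := fun h2 => this (Prod.ext h1 h2)
          simp [Matrix.one_apply, h2, mul_zero]
        · simp [Matrix.one_apply, h1]
    · -- L/R case: zero on both sides
      rw [Matrix.blockDiagonal_apply]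
      have hj : es (Sum.inl ja) ≠ es (Sum.inr jb') := fun hcon => by
        have := es.injective hcon; simp at this
      rw [if_neg hj]
      have hCl : C (finProdFinEquiv (r, s), es (Sum.inl ja))
          = ((eA (s, ja)).2, E (Sum.inl (r, (eA (s, ja)).1))) := by
        simp [hCdef, Equiv.prodSumDistrib]
      have hCr : C (finProdFinEquiv (r', s'), es (Sum.inr jb'))
          = ((eB (r', jb')).2, E (Sum.inr (s', (eB (r', jb')).1))) := by
        simp [hCdef, Equiv.prodSumDistrib]
      rw [hCl, hCr]
      simp [hρdef, Matrix.kroneckerMap_apply]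
    · -- R/L case
      rw [Matrix.blockDiagonal_apply]
      have hj : es (Sum.inr jb) ≠ es (Sum.inl ja') := fun hcon => by
        have := es.injective hcon; simp at this
      rw [if_neg hj]
      have hCl : C (finProdFinEquiv (r, s), es (Sum.inr jb))
          = ((eB (r, jb)).2, E (Sum.inr (s, (eB (r, jb)).1))) := by
        simp [hCdef, Equiv.prodSumDistrib]
      have hCr : C (finProdFinEquiv (r', s'), es (Sum.inl ja'))
          = ((eA (s', ja')).2, E (Sum.inl (r', (eA (s', ja')).1))) := by
        simp [hCdef, Equiv.prodSumDistrib]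
      rw [hCl, hCr]
      simp [hρdef, Matrix.kroneckerMap_apply]
    · -- R/R case
      rw [Matrix.blockDiagonal_apply]
      simp only [hes2, if_true]
      have hC : ∀ (r : Fin p) (s : Fin q) (jb : Fin b),
          C (finProdFinEquiv (r, s), es (Sum.inr jb))
          = ((eB (r, jb)).2, E (Sum.inr (s, (eB (r, jb)).1))) := by
        intro r s jb
        simp [hCdef, Equiv.prodSumDistrib]
      rw [hC, hC]
      simp only [Matrix.kroneckerMap_apply, hρdef, Matrix.submatrix_apply,
        Equiv.symm_apply_apply, Matrix.fromBlocks_apply₂₂]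
      by_cases hj : es (Sum.inr jb) = es (Sum.inr jb')
      · have hjb : jb = jb' := by
          have := es.injective hj; simpa using this
        subst hjb
        rw [if_pos rfl]
        show rKronFun p q y (finProdFinEquiv (r, s)) (finProdFinEquiv (r', s')) = _
        rw [rKronFun]
        simp only [Matrix.submatrix_apply, Equiv.symm_apply_apply,
          Matrix.kroneckerMap_apply, Matrix.one_apply]
        by_cases hr : r = r'
        · subst hr
          simp [Matrix.one_apply]
        · have : eB (r, jb) ≠ eB (r', jb) := fun hcon => hr (by
            have := eB.injective hcon; exact ((Prod.mk.injEq _ _ _ _).mp this).1)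
          rw [if_neg hr]
          by_cases h1 : (eB (r, jb)).1 = (eB (r', jb)).1
          · have h2 : (eB (r, jb)).2 ≠ (eB (r', jb)).2 := fun h2 => this (Prod.ext h1 h2)
            simp [Matrix.one_apply, h2, mul_zero]
          · simp [Matrix.one_apply, h1]
      · have hjb : jb ≠ jb' := fun hcon => hj (by rw [hcon])
        rw [if_neg hj]
        have : eB (r, jb) ≠ eB (r', jb') := fun hcon => hjb (by
          have := eB.injective hcon; exact ((Prod.mk.injEq _ _ _ _).mp this).2)
        by_cases h1 : (eB (r, jb)).1 = (eB (r', jb')).1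
        · have h2 : (eB (r, jb)).2 ≠ (eB (r', jb')).2 := fun h2 => this (Prod.ext h1 h2)
          simp [Matrix.one_apply, h2, mul_zero]
        · simp [Matrix.one_apply, h1]
  -- conclude
  ext w z
  simp only [Matrix.submatrix_apply, rKronFun]
  have hw1 : finProdFinEquiv.symm w = C ((finProdFinEquiv.symm.trans C.symm) w) := by simp
  have hz1 : finProdFinEquiv.symm z = C ((finProdFinEquiv.symm.trans C.symm) z) := by simp
  rw [hw1, hz1]
  set ζ := (finProdFinEquiv.symm.trans C.symm) w with hζ
  set ζ' := (finProdFinEquiv.symm.trans C.symm) z with hζ'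
  obtain ⟨rs, hrs⟩ := finProdFinEquiv.surjective ζ.1
  obtain ⟨j, hj⟩ := es.surjective ζ.2
  obtain ⟨rs', hrs'⟩ := finProdFinEquiv.surjective ζ'.1
  obtain ⟨j', hj'⟩ := es.surjective ζ'.2
  have hζeq : ζ = (finProdFinEquiv rs, es j) := by rw [hrs, hj]
  have hζeq' : ζ' = (finProdFinEquiv rs', es j') := by rw [hrs', hj']
  rw [hζeq, hζeq']
  exact main rs.1 rs'.1 rs.2 rs'.2 j j'


namespace DD

variable (μ : Measure 𝕀)

/-- real-valued cdf -/
def cdfR (t : 𝕀) : ℝ := (μ (Set.Iic t)).toReal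

lemma ofReal_cdfR [IsProbabilityMeasure μ] (t : 𝕀) :
    ENNReal.ofReal (cdfR μ t) = μ (Set.Iic t) :=
  ENNReal.ofReal_toReal (measure_ne_top μ _)

lemma cdfR_nonneg (t : 𝕀) : 0 ≤ cdfR μ t := ENNReal.toReal_nonneg

lemma cdfR_le_one [IsProbabilityMeasure μ] (t : 𝕀) : cdfR μ t ≤ 1 := by
  rw [cdfR, show (1:ℝ) = (1:ℝ≥0∞).toReal by simp]
  apply ENNReal.toReal_mono (by simp)
  rw [← measure_univ (μ := μ)]
  exact measure_mono (Set.subset_univ _)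

lemma cdfR_zero [IsProbabilityMeasure μ] (hd : Diffuse μ) : cdfR μ 0 = 0 := by
  have : Set.Iic (0 : 𝕀) = {0} := by
    ext x
    simp only [Set.mem_Iic, Set.mem_singleton_iff]
    constructor
    · intro h; exact le_antisymm h x.2.1
    · intro h; rw [h]
  rw [cdfR, this, hd 0]; simp

lemma cdfR_one [IsProbabilityMeasure μ] : cdfR μ 1 = 1 := by
  have : Set.Iic (1 : 𝕀) = Set.univ := by
    ext x; simpa using (unitInterval.le_one' (t := x))
  rw [cdfR, this, measure_univ]; simp

lemma cdfR_strictMono [IsProbabilityMeasure μ] (hf : Faithful μ) : StrictMono (cdfR μ) := by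
  intro t t' htt
  have hU : Set.Iic t ∪ Set.Ioc t t' = Set.Iic t' := Set.Iic_union_Ioc_eq_Iic htt.le
  have hdisj : Disjoint (Set.Iic t) (Set.Ioc t t') := by
    apply Set.disjoint_left.mpr
    rintro x hx ⟨hx1, _⟩
    exact absurd hx (not_le.mpr hx1)
  have hmeas : μ (Set.Iic t') = μ (Set.Iic t) + μ (Set.Ioc t t') := by
    rw [← hU, measure_union hdisj measurableSet_Ioc]
  have hpos : 0 < μ (Set.Ioc t t') := by
    obtain ⟨m, hm⟩ := exists_between htt
    refine lt_of_lt_of_le (lt_of_lt_of_le ?_ (measure_mono (Set.Ioo_subset_Ioc_self))) le_rfl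
    exact hf _ isOpen_Ioo ⟨m, hm⟩
  rw [cdfR, cdfR]
  rw [ENNReal.toReal_lt_toReal (measure_ne_top μ _) (measure_ne_top μ _), hmeas]
  exact ENNReal.lt_add_right (measure_ne_top μ _) hpos.ne'

lemma measure_Iio_eq [IsProbabilityMeasure μ] (hd : Diffuse μ) (t : 𝕀) :
    μ (Set.Iio t) = μ (Set.Iic t) := by
  rw [← Set.Iio_union_right, measure_union (by simp) (measurableSet_singleton t), hd t, add_zero]

lemma measure_Ioi_eq [IsProbabilityMeasure μ] (hd : Diffuse μ) (t : 𝕀) :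
    μ (Set.Ioi t) = μ (Set.Ici t) := by
  rw [← Set.Ioi_union_left, measure_union (by simp) (measurableSet_singleton t), hd t, add_zero]

/-- surjectivity of the cdf -/
lemma exists_cdf_eq [IsProbabilityMeasure μ] (hf : Faithful μ) (hd : Diffuse μ)
    (c : ℝ) (hc0 : 0 ≤ c) (hc1 : c ≤ 1) : ∃ t : 𝕀, μ (Set.Iic t) = ENNReal.ofReal c := by
  classical
  set S : Set ℝ := Subtype.val '' {t : 𝕀 | cdfR μ t ≤ c} with hS
  have hS0 : (0:ℝ) ∈ S := ⟨0, by simp [cdfR_zero μ hd, hc0], rfl⟩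
  have hSne : S.Nonempty := ⟨0, hS0⟩
  have hSbdd : BddAbove S := by
    refine ⟨1, ?_⟩
    rintro r ⟨t, _, rfl⟩
    exact t.2.2
  set r0 := sSup S with hr0
  have h0r : 0 ≤ r0 := le_csSup hSbdd hS0
  have hr1 : r0 ≤ 1 := csSup_le hSne (by rintro r ⟨t, _, rfl⟩; exact t.2.2)
  set t0 : 𝕀 := ⟨r0, h0r, hr1⟩ with ht0
  have hupper : ∀ t : 𝕀, t0 < t → c < cdfR μ t := by
    intro t ht
    by_contra hcon
    push_neg at hcon
    have : (t : ℝ) ∈ S := ⟨t, hcon, rfl⟩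
    have := le_csSup hSbdd this
    exact absurd this (not_le.mpr ht)
  -- upper bound: μ (Iic t0) ≤ ofReal c
  have hle : μ (Set.Iic t0) ≤ ENNReal.ofReal c := by
    rw [← measure_Iio_eq μ hd]
    rcases eq_or_lt_of_le h0r with h00 | h00
    · have : Set.Iio t0 = ∅ := by
        ext x
        simp only [Set.mem_Iio, Set.mem_empty_iff_false, iff_false, not_lt]
        rw [← Subtype.coe_le_coe]
        show r0 ≤ (x : ℝ)
        rw [← h00]
        exact x.2.1
      rw [this]; simp
    · -- approximate from below
      have hmem : ∀ n : ℕ, r0 - r0 / (n + 2) ∈ Set.Icc (0:ℝ) 1 := by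
        intro n
        constructor
        · have : r0 / (n+2) ≤ r0 := by
            apply div_le_self h0r
            push_cast; linarith
          linarith
        · have : 0 ≤ r0 / (n+2) := by positivity
          linarith
      set tn : ℕ → 𝕀 := fun n => ⟨r0 - r0 / (n + 2), hmem n⟩ with htn
      have htn_lt : ∀ n, tn n < t0 := by
        intro n
        rw [← Subtype.coe_lt_coe]
        show r0 - r0 / (n+2) < r0
        have : 0 < r0 / (n+2) := by positivity
        linarith
      have hcover : Set.Iio t0 = ⋃ n, Set.Iic (tn n) := by
        ext x
        simp only [Set.mem_Iio, Set.mem_iUnion, Set.mem_Iic]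
        constructor
        · intro hx
          have hx' : (x:ℝ) < r0 := hx
          obtain ⟨n, hn⟩ := exists_nat_gt (r0 / (r0 - x))
          refine ⟨n, ?_⟩
          rw [← Subtype.coe_le_coe]
          show (x:ℝ) ≤ r0 - r0 / (n+2)
          have hpos : 0 < r0 - x := by linarith
          have h2 : r0 / (r0 - x) < n + 2 := by push_cast; linarith
          have h3 : r0 / (n+2) < r0 - x := by
            rw [div_lt_iff₀ (by positivity)]
            calc r0 = (r0 / (r0 - x)) * (r0 - x) := by field_simp
            _ < (n+2) * (r0 - x) := by
              apply mul_lt_mul_of_pos_right h2 hpos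
            _ = (r0 - x) * (n+2) := by ring
          linarith
        · intro ⟨n, hn⟩
          exact lt_of_le_of_lt hn (htn_lt n)
      rw [hcover]
      have hdir : Directed (fun x1 x2 => x1 ⊆ x2) (fun n => Set.Iic (tn n)) := by
        apply Monotone.directed_le
        intro m n hmn
        apply Set.Iic_subset_Iic.mpr
        rw [← Subtype.coe_le_coe]
        show r0 - r0 / (m+2) ≤ r0 - r0 / (n+2)
        have hcast : (m:ℝ) ≤ (n:ℝ) := Nat.cast_le.mpr hmn
        have : r0 / (n+2) ≤ r0 / (m+2) :=
          div_le_div_of_nonneg_left h0r (by positivity) (by push_cast; linarith)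
        linarith
      rw [Directed.measure_iUnion hdir]
      apply iSup_le
      intro n
      obtain ⟨r, ⟨t', ht', rfl⟩, hgt⟩ := exists_lt_of_lt_csSup hSne (htn_lt n)
      calc μ (Set.Iic (tn n)) ≤ μ (Set.Iic t') := by
            apply measure_mono; apply Set.Iic_subset_Iic.mpr
            exact le_of_lt (Subtype.coe_lt_coe.mp hgt)
      _ = ENNReal.ofReal (cdfR μ t') := (ofReal_cdfR μ t').symm
      _ ≤ ENNReal.ofReal c := ENNReal.ofReal_le_ofReal ht'
  -- lower bound
  have hge : ENNReal.ofReal c ≤ μ (Set.Iic t0) := by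
    rcases eq_or_lt_of_le hr1 with h11 | h11
    · have : Set.Iic t0 = Set.univ := by
        ext x
        simp only [Set.mem_Iic, Set.mem_univ, iff_true]
        rw [← Subtype.coe_le_coe]
        show (x:ℝ) ≤ r0
        rw [h11]; exact x.2.2
      rw [this, measure_univ]
      calc ENNReal.ofReal c ≤ ENNReal.ofReal 1 := ENNReal.ofReal_le_ofReal hc1
      _ = 1 := by simp
    · have hmem : ∀ n : ℕ, r0 + (1 - r0) / (n + 2) ∈ Set.Icc (0:ℝ) 1 := by
        intro n
        have h1 : 0 < (1 - r0) := by linarith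
        constructor
        · have : 0 ≤ (1-r0) / (n+2) := by
            apply div_nonneg h1.le; positivity
          linarith
        · have : (1-r0) / (n+2) ≤ (1 - r0) := by
            apply div_le_self h1.le
            push_cast; linarith
          linarith
      set sn : ℕ → 𝕀 := fun n => ⟨r0 + (1 - r0) / (n + 2), hmem n⟩ with hsn
      have hsn_gt : ∀ n, t0 < sn n := by
        intro n
        rw [← Subtype.coe_lt_coe]
        show r0 < r0 + (1-r0)/(n+2)
        have : 0 < (1-r0)/(n+2) := div_pos (by linarith) (by positivity)
        linarith
      have hcap : Set.Iic t0 = ⋂ n, Set.Iic (sn n) := by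
        ext x
        simp only [Set.mem_Iic, Set.mem_iInter]
        constructor
        · intro hx n
          exact le_of_lt (lt_of_le_of_lt hx (hsn_gt n))
        · intro hx
          rw [← Subtype.coe_le_coe]
          by_contra hcon
          push_neg at hcon
          have hpos : 0 < (x:ℝ) - r0 := by linarith
          obtain ⟨n, hn⟩ := exists_nat_gt ((1 - r0) / ((x:ℝ) - r0))
          have h2 : (1-r0) / ((x:ℝ) - r0) < n + 2 := by push_cast; linarith
          have h3 : (1-r0) / (n+2) < (x:ℝ) - r0 := by
            rw [div_lt_iff₀ (by positivity)]
            calc (1-r0) = ((1-r0) / ((x:ℝ) - r0)) * ((x:ℝ) - r0) := by field_simp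
            _ < (n+2) * ((x:ℝ) - r0) := mul_lt_mul_of_pos_right h2 hpos
            _ = ((x:ℝ) - r0) * (n+2) := by ring
          have := hx n
          rw [← Subtype.coe_le_coe] at this
          have : (x:ℝ) ≤ r0 + (1-r0)/(n+2) := this
          linarith
      rw [hcap]
      have hdir : Directed (fun x1 x2 => x1 ⊇ x2) (fun n => Set.Iic (sn n)) := by
        apply Antitone.directed_ge
        intro m n hmn
        apply Set.Iic_subset_Iic.mpr
        rw [← Subtype.coe_le_coe]
        show r0 + (1-r0)/(n+2) ≤ r0 + (1-r0)/(m+2)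
        have h1 : 0 < (1 - r0) := by linarith
        have hcast : (m:ℝ) ≤ (n:ℝ) := Nat.cast_le.mpr hmn
        have : (1-r0) / (n+2) ≤ (1-r0) / (m+2) :=
          div_le_div_of_nonneg_left h1.le (by positivity) (by push_cast; linarith)
        linarith
      rw [Directed.measure_iInter (fun n => (measurableSet_Iic).nullMeasurableSet) hdir
        ⟨0, measure_ne_top μ _⟩]
      apply le_iInf
      intro n
      have := hupper (sn n) (hsn_gt n)
      calc ENNReal.ofReal c ≤ ENNReal.ofReal (cdfR μ (sn n)) := ENNReal.ofReal_le_ofReal this.le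
      _ = μ (Set.Iic (sn n)) := ofReal_cdfR μ _
  exact ⟨t0, le_antisymm hle hge⟩

end DD

namespace DD

variable (μ : Measure 𝕀) [IsProbabilityMeasure μ]

/-- the cdf as an order isomorphism of `𝕀`. -/
def Fiso (hf : Faithful μ) (hd : Diffuse μ) : 𝕀 ≃o 𝕀 :=
  StrictMono.orderIsoOfSurjective
    (fun t => ⟨cdfR μ t, cdfR_nonneg μ t, cdfR_le_one μ t⟩)
    (fun a b hab => by
      rw [← Subtype.coe_lt_coe]
      exact cdfR_strictMono μ hf hab)
    (by
      rintro ⟨c, hc0, hc1⟩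
      obtain ⟨t0, ht0⟩ := exists_cdf_eq μ hf hd c hc0 hc1
      refine ⟨t0, Subtype.ext ?_⟩
      show cdfR μ t0 = c
      rw [cdfR, ht0, ENNReal.toReal_ofReal hc0])

lemma Fiso_coe (hf : Faithful μ) (hd : Diffuse μ) (t : 𝕀) : (Fiso μ hf hd t : ℝ) = cdfR μ t := rfl

/-- quantile function -/
def qle (hf : Faithful μ) (hd : Diffuse μ) (c : ℝ) : 𝕀 := (Fiso μ hf hd).symm (Set.projIcc 0 1 zero_le_one c)

lemma cdfR_qle (hf : Faithful μ) (hd : Diffuse μ) {c : ℝ} (hc : c ∈ Set.Icc (0:ℝ) 1) : cdfR μ (qle μ hf hd c) = c := by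
  rw [← Fiso_coe μ hf hd, qle, OrderIso.apply_symm_apply, Set.projIcc_of_mem]
  exact hc

lemma qle_le_iff (hf : Faithful μ) (hd : Diffuse μ) {c : ℝ} (hc : c ∈ Set.Icc (0:ℝ) 1) (x : 𝕀) :
    qle μ hf hd c ≤ x ↔ c ≤ cdfR μ x := by
  rw [qle, OrderIso.symm_apply_le, Set.projIcc_of_mem _ hc]
  exact Subtype.coe_le_coe (x := (⟨c, hc⟩ : 𝕀)) (y := (Fiso μ hf hd) x)

lemma le_qle_iff (hf : Faithful μ) (hd : Diffuse μ) {c : ℝ} (hc : c ∈ Set.Icc (0:ℝ) 1) (x : 𝕀) :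
    x ≤ qle μ hf hd c ↔ cdfR μ x ≤ c := by
  rw [qle, OrderIso.le_symm_apply, Set.projIcc_of_mem _ hc]
  exact Subtype.coe_le_coe (x := (Fiso μ hf hd) x) (y := (⟨c, hc⟩ : 𝕀))

lemma set_cdf_le (hf : Faithful μ) (hd : Diffuse μ) {c : ℝ} (hc : c ∈ Set.Icc (0:ℝ) 1) :
    {t | cdfR μ t ≤ c} = Set.Iic (qle μ hf hd c) := by
  ext t
  simp only [Set.mem_setOf_eq, Set.mem_Iic]
  rw [le_qle_iff μ hf hd hc]

lemma set_cdf_lt (hf : Faithful μ) (hd : Diffuse μ) {c : ℝ} (hc : c ∈ Set.Icc (0:ℝ) 1) :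
    {t | cdfR μ t < c} = Set.Iio (qle μ hf hd c) := by
  ext t
  simp only [Set.mem_setOf_eq, Set.mem_Iio, ← not_le, ← not_le (a := c)]
  rw [qle_le_iff μ hf hd hc]

lemma measure_cdf_le (hf : Faithful μ) (hd : Diffuse μ) {c : ℝ} (hc : c ∈ Set.Icc (0:ℝ) 1) :
    μ {t | cdfR μ t ≤ c} = ENNReal.ofReal c := by
  rw [set_cdf_le μ hf hd hc, ← ofReal_cdfR, cdfR_qle μ hf hd hc]

lemma measure_cdf_lt (hf : Faithful μ) (hd : Diffuse μ) {c : ℝ} (hc : c ∈ Set.Icc (0:ℝ) 1) :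
    μ {t | cdfR μ t < c} = ENNReal.ofReal c := by
  rw [set_cdf_lt μ hf hd hc, measure_Iio_eq μ hd, ← ofReal_cdfR, cdfR_qle μ hf hd hc]

lemma one_sub_ofReal {c : ℝ} (hc0 : 0 ≤ c) :
    (1 : ℝ≥0∞) - ENNReal.ofReal c = ENNReal.ofReal (1 - c) := by
  rw [ENNReal.ofReal_sub _ hc0, ENNReal.ofReal_one]

lemma measure_cdf_ge (hf : Faithful μ) (hd : Diffuse μ) {c : ℝ} (hc : c ∈ Set.Icc (0:ℝ) 1) :
    μ {t | c ≤ cdfR μ t} = ENNReal.ofReal (1 - c) := by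
  have hcompl : {t | c ≤ cdfR μ t} = {t | cdfR μ t < c}ᶜ := by
    ext t; simp [not_lt]
  rw [hcompl, set_cdf_lt μ hf hd hc, measure_compl measurableSet_Iio (measure_ne_top μ _),
    measure_univ, measure_Iio_eq μ hd, ← ofReal_cdfR, cdfR_qle μ hf hd hc,
    one_sub_ofReal hc.1]

/-- the four path shapes -/
def psiFun : Bool → Bool → ℝ → ℝ
  | false, false => fun s => 1 - |2 * s - 1|
  | false, true  => fun s => s
  | true,  false => fun s => 1 - s
  | true,  true  => fun s => |2 * s - 1|

lemma psiFun_cont (b0 b1 : Bool) : Continuous (psiFun b0 b1) := by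
  cases b0 <;> cases b1 <;> simp only [psiFun] <;> fun_prop

lemma psiFun_mem (b0 b1 : Bool) {s : ℝ} (hs : s ∈ Set.Icc (0:ℝ) 1) :
    psiFun b0 b1 s ∈ Set.Icc (0:ℝ) 1 := by
  obtain ⟨h0, h1⟩ := hs
  have habs : |2 * s - 1| ≤ 1 := abs_le.mpr ⟨by linarith, by linarith⟩
  have habs0 : 0 ≤ |2 * s - 1| := abs_nonneg _
  cases b0 <;> cases b1 <;> simp only [psiFun] <;> constructor <;> linarith

lemma psiFun_zero (b0 b1 : Bool) : psiFun b0 b1 0 = if b0 then 1 else 0 := by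
  cases b0 <;> cases b1 <;> simp [psiFun] <;> norm_num [abs_of_nonpos]

lemma psiFun_one (b0 b1 : Bool) : psiFun b0 b1 1 = if b1 then 1 else 0 := by
  cases b0 <;> cases b1 <;> simp [psiFun] <;> norm_num [abs_of_nonneg]

lemma psiFun_surjOn (b0 b1 : Bool) {r : ℝ} (hr : r ∈ Set.Icc (0:ℝ) 1) :
    ∃ s ∈ Set.Icc (0:ℝ) 1, psiFun b0 b1 s = r := by
  obtain ⟨h0, h1⟩ := hr
  cases b0 <;> cases b1
  · refine ⟨r / 2, ⟨by linarith, by linarith⟩, ?_⟩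
    simp only [psiFun]
    rw [abs_of_nonpos (by linarith)]
    ring
  · exact ⟨r, ⟨h0, h1⟩, rfl⟩
  · refine ⟨1 - r, ⟨by linarith, by linarith⟩, ?_⟩
    simp only [psiFun]; ring
  · refine ⟨(1 + r) / 2, ⟨by linarith, by linarith⟩, ?_⟩
    simp only [psiFun]
    rw [show 2 * ((1 + r)/2) - 1 = r by ring, abs_of_nonneg h0]

/-- key measure computation for each shape -/
lemma measure_psi (hf : Faithful μ) (hd : Diffuse μ) (b0 b1 : Bool) {c : ℝ} (hc0 : 0 ≤ c) (hc1 : c ≤ 1) :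
    μ {t | psiFun b0 b1 (cdfR μ t) ≤ c} = ENNReal.ofReal c := by
  cases b0 <;> cases b1
  · -- tent
    simp only [psiFun]
    have hAB : {t | 1 - |2 * cdfR μ t - 1| ≤ c}
        = {t | cdfR μ t ≤ c/2} ∪ {t | 1 - c/2 ≤ cdfR μ t} := by
      ext t
      simp only [Set.mem_setOf_eq, Set.mem_union]
      constructor
      · intro h
        rcases abs_cases (2 * cdfR μ t - 1) with ⟨h1, h2⟩ | ⟨h1, h2⟩
        · right; rw [h1] at h; linarith
        · left; rw [h1] at h; linarith
      · rintro (h | h)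
        · have := neg_abs_le (2 * cdfR μ t - 1)
          linarith
        · have := le_abs_self (2 * cdfR μ t - 1)
          linarith
    rw [hAB]
    have hc2 : c/2 ∈ Set.Icc (0:ℝ) 1 := ⟨by linarith, by linarith⟩
    have hc2' : 1 - c/2 ∈ Set.Icc (0:ℝ) 1 := ⟨by linarith, by linarith⟩
    set tA := qle μ hf hd (c/2) with htA
    set tB := qle μ hf hd (1 - c/2) with htB
    have htAB : tA ≤ tB := by
      rw [htA, htB, qle, qle]
      apply (Fiso μ hf hd).symm.monotone
      exact Set.monotone_projIcc _ (by linarith)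
    have hA : {t | cdfR μ t ≤ c/2} = Set.Iic tA := set_cdf_le μ hf hd hc2
    have hB : {t | 1 - c/2 ≤ cdfR μ t} = Set.Ici tB := by
      have : {t | 1 - c/2 ≤ cdfR μ t} = {t | cdfR μ t < 1 - c/2}ᶜ := by
        ext t; simp [not_lt]
      rw [this, set_cdf_lt μ hf hd hc2', Set.compl_Iio]
    rw [hA, hB]
    have hsplit : Set.Iic tA ∪ Set.Ici tB = Set.Iic tA ∪ (Set.Ici tB \ Set.Iic tA) := by
      rw [Set.union_diff_self]
    rw [hsplit, measure_union Set.disjoint_sdiff_right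
      ((measurableSet_Ici).diff measurableSet_Iic)]
    have hdiffeq : μ (Set.Ici tB \ Set.Iic tA) = μ (Set.Ici tB) := by
      apply le_antisymm (measure_mono Set.diff_subset)
      rw [← measure_Ioi_eq μ hd]
      apply measure_mono
      intro x hx
      exact ⟨Set.mem_Ici.mpr (le_of_lt hx), fun h => not_le.mpr (lt_of_le_of_lt htAB hx) (Set.mem_Iic.mp h)⟩
    rw [hdiffeq]
    have h1 : μ (Set.Iic tA) = ENNReal.ofReal (c/2) := by
      rw [← hA, measure_cdf_le μ hf hd hc2]
    have h2 : μ (Set.Ici tB) = ENNReal.ofReal (c/2) := by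
      rw [← hB, measure_cdf_ge μ hf hd hc2']
      congr 1; ring
    rw [h1, h2, ← ENNReal.ofReal_add (by linarith) (by linarith)]
    congr 1; ring
  · -- identity
    simp only [psiFun]
    exact measure_cdf_le μ hf hd ⟨hc0, hc1⟩
  · -- reversal
    simp only [psiFun]
    have : {t | 1 - cdfR μ t ≤ c} = {t | 1 - c ≤ cdfR μ t} := by
      ext t; simp only [Set.mem_setOf_eq]; constructor <;> intro h <;> linarith
    rw [this, measure_cdf_ge μ hf hd ⟨by linarith, by linarith⟩]
    congr 1; ring
  · -- vee
    simp only [psiFun]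
    have hset : {t | |2 * cdfR μ t - 1| ≤ c}
        = {t | cdfR μ t ≤ (1+c)/2} \ {t | cdfR μ t < (1-c)/2} := by
      ext t
      simp only [Set.mem_setOf_eq, Set.mem_diff, not_lt]
      rw [abs_le]
      constructor
      · rintro ⟨ha, hb⟩; constructor <;> linarith
      · rintro ⟨ha, hb⟩; constructor <;> linarith
    have hcl : (1-c)/2 ∈ Set.Icc (0:ℝ) 1 := ⟨by linarith, by linarith⟩
    have hcr : (1+c)/2 ∈ Set.Icc (0:ℝ) 1 := ⟨by linarith, by linarith⟩
    rw [hset, set_cdf_le μ hf hd hcr, set_cdf_lt μ hf hd hcl]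
    have hsub : Set.Iio (qle μ hf hd ((1-c)/2)) ⊆ Set.Iic (qle μ hf hd ((1+c)/2)) := by
      have : qle μ hf hd ((1-c)/2) ≤ qle μ hf hd ((1+c)/2) := by
        rw [qle, qle]
        apply (Fiso μ hf hd).symm.monotone
        exact Set.monotone_projIcc _ (by linarith)
      exact fun x hx => le_trans (le_of_lt hx) this
    rw [measure_diff hsub measurableSet_Iio.nullMeasurableSet (measure_ne_top μ _),
      measure_Iio_eq μ hd, ← ofReal_cdfR, ← ofReal_cdfR, cdfR_qle μ hf hd hcr,
      cdfR_qle μ hf hd hcl, ← ENNReal.ofReal_sub _ (by linarith)]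
    congr 1; ring

end DD

namespace DD

variable (μ ν : Measure 𝕀) [IsProbabilityMeasure μ] [IsProbabilityMeasure ν]

lemma cdfR_cont (hf : Faithful μ) (hd : Diffuse μ) : Continuous (cdfR μ) := by
  have : cdfR μ = fun t => ((Fiso μ hf hd t : 𝕀) : ℝ) := rfl
  rw [this]
  exact continuous_subtype_val.comp (OrderIso.continuous _)

/-- the path maps -/
def xi (hfν : Faithful ν) (hdν : Diffuse ν) (b0 b1 : Bool) (t : 𝕀) : 𝕀 :=
  qle ν hfν hdν (psiFun b0 b1 (cdfR μ t))

lemma xi_cont (hfμ : Faithful μ) (hdμ : Diffuse μ) (hfν : Faithful ν) (hdν : Diffuse ν)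
    (b0 b1 : Bool) : Continuous (xi μ ν hfν hdν b0 b1) := by
  unfold xi qle
  exact (OrderIso.continuous ((Fiso ν hfν hdν).symm)).comp
    ((continuous_projIcc).comp ((psiFun_cont b0 b1).comp (cdfR_cont μ hfμ hdμ)))

lemma qle_zero (hfν : Faithful ν) (hdν : Diffuse ν) : qle ν hfν hdν 0 = 0 := by
  rw [qle, show Set.projIcc (0:ℝ) 1 zero_le_one 0 = ⟨0, by norm_num⟩ from
    Set.projIcc_of_mem _ ⟨le_refl _, zero_le_one⟩, OrderIso.symm_apply_eq]
  exact Subtype.ext (cdfR_zero ν hdν).symm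

lemma qle_one (hfν : Faithful ν) (hdν : Diffuse ν) : qle ν hfν hdν 1 = 1 := by
  rw [qle, show Set.projIcc (0:ℝ) 1 zero_le_one 1 = ⟨1, by norm_num⟩ from
    Set.projIcc_of_mem _ ⟨zero_le_one, le_refl _⟩, OrderIso.symm_apply_eq]
  exact Subtype.ext (cdfR_one ν).symm

lemma qle_cdfR (hfν : Faithful ν) (hdν : Diffuse ν) (s : 𝕀) :
    qle ν hfν hdν (cdfR ν s) = s := by
  rw [qle, show Set.projIcc (0:ℝ) 1 zero_le_one (cdfR ν s) = ⟨cdfR ν s, ⟨cdfR_nonneg ν s, cdfR_le_one ν s⟩⟩ from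
    Set.projIcc_of_mem _ ⟨cdfR_nonneg ν s, cdfR_le_one ν s⟩, OrderIso.symm_apply_eq]
  exact Subtype.ext rfl

lemma xi_zero (hdμ : Diffuse μ) (hfν : Faithful ν) (hdν : Diffuse ν) (b0 b1 : Bool) :
    xi μ ν hfν hdν b0 b1 0 = if b0 then 1 else 0 := by
  rw [xi, cdfR_zero μ hdμ, psiFun_zero]
  cases b0
  · simp [qle_zero ν hfν hdν]
  · simp [qle_one ν hfν hdν]

lemma xi_one (hfν : Faithful ν) (hdν : Diffuse ν) (b0 b1 : Bool) :
    xi μ ν hfν hdν b0 b1 1 = if b1 then 1 else 0 := by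
  rw [xi, cdfR_one μ, psiFun_one]
  cases b1
  · simp [qle_zero ν hfν hdν]
  · simp [qle_one ν hfν hdν]

lemma xi_surjective (hfμ : Faithful μ) (hdμ : Diffuse μ) (hfν : Faithful ν) (hdν : Diffuse ν)
    (b0 b1 : Bool) : Function.Surjective (xi μ ν hfν hdν b0 b1) := by
  intro s
  obtain ⟨v, hv, hpsi⟩ := psiFun_surjOn b0 b1 ⟨cdfR_nonneg ν s, cdfR_le_one ν s⟩
  refine ⟨qle μ hfμ hdμ v, ?_⟩
  rw [xi, cdfR_qle μ hfμ hdμ hv, hpsi, qle_cdfR ν hfν hdν]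

lemma map_xi (hfμ : Faithful μ) (hdμ : Diffuse μ) (hfν : Faithful ν) (hdν : Diffuse ν)
    (b0 b1 : Bool) : Measure.map (xi μ ν hfν hdν b0 b1) μ = ν := by
  apply MeasureTheory.Measure.ext_of_Iic
  intro x
  rw [Measure.map_apply (xi_cont μ ν hfμ hdμ hfν hdν b0 b1).measurable measurableSet_Iic]
  have hpre : xi μ ν hfν hdν b0 b1 ⁻¹' (Set.Iic x)
      = {t | psiFun b0 b1 (cdfR μ t) ≤ cdfR ν x} := by
    ext t
    simp only [Set.mem_preimage, Set.mem_Iic, Set.mem_setOf_eq, xi]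
    exact qle_le_iff ν hfν hdν (psiFun_mem b0 b1 ⟨cdfR_nonneg μ t, cdfR_le_one μ t⟩) x
  rw [hpre, measure_psi μ hfμ hdμ b0 b1 (cdfR_nonneg ν x) (cdfR_le_one ν x), ofReal_cdfR]

end DD


-- extra helpers
lemma trace_submatrix_equiv {m n : Type*} [Fintype m] [Fintype n] [DecidableEq m]
    (M : Matrix m m ℂ) (e : n ≃ m) : (M.submatrix ⇑e ⇑e).trace = M.trace := by
  rw [Matrix.trace, Matrix.trace]
  exact Equiv.sum_comp e (fun j => M.diag j)

lemma card_decide_false (k a : ℕ) (h : a ≤ k) :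
    Fintype.card {i : Fin k // decide (a ≤ (i : ℕ)) = false} = a := by
  have e : {i : Fin k // decide (a ≤ (i : ℕ)) = false} ≃ Fin a :=
    { toFun := fun x => ⟨x.1.1, by have := x.2; simp at this; omega⟩
      invFun := fun j => ⟨⟨j.1, by omega⟩, by simp⟩
      left_inv := fun x => Subtype.ext (Fin.ext rfl)
      right_inv := fun j => Fin.ext rfl }
  rw [Fintype.card_congr e, Fintype.card_fin]

lemma card_decide_true (k a : ℕ) (h : a ≤ k) :
    Fintype.card {i : Fin k // decide (a ≤ (i : ℕ)) = true} = k - a := by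
  have e : {i : Fin k // decide (a ≤ (i : ℕ)) = true} ≃ Fin (k - a) :=
    { toFun := fun x => ⟨x.1.1 - a, by have := x.2; simp at this; omega⟩
      invFun := fun j => ⟨⟨j.1 + a, by omega⟩, by simp⟩
      left_inv := fun x => by
        rcases x with ⟨⟨v, hv⟩, hx⟩
        simp only [decide_eq_true_eq] at hx
        exact Subtype.ext (Fin.ext (by simp; omega))
      right_inv := fun j => Fin.ext (by simp) }
  rw [Fintype.card_congr e, Fintype.card_fin]


set_option maxHeartbeats 2000000 in
/-- For co-prime `p, q` there exists `M(p,q)` such that whenever `p', q'`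
are co-prime, both exceed `M(p,q)`, and `pq ∣ p'q'`, every `⟨Z_{p,q}, τ⟩` embeds into
`⟨Z_{p',q'}, σ⟩` for all faithful diffuse measures τ, σ. -/
theorem statement13 (p q : ℕ) (hp : 1 ≤ p) (hq : 1 ≤ q) (hpq : Nat.Coprime p q) :
    ∃ M : ℕ, ∀ p' q' : ℕ, 1 ≤ p' → 1 ≤ q' → Nat.Coprime p' q' → M < p' → M < q' →
      p * q ∣ p' * q' →
      ∀ (τ σ : Measure 𝕀), IsProbabilityMeasure τ → IsProbabilityMeasure σ →
        τ.Regular → σ.Regular → Faithful τ → Diffuse τ → Faithful σ → Diffuse σ →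
        ∃ φ : ↥(Zpq p q) →⋆ₐ[ℂ] ↥(Zpq p' q'), Function.Injective φ ∧
          ∀ f : ↥(Zpq p q), trInt (p' * q') σ ↑(φ f) = trInt (p * q) τ ↑f := by
  classical
  refine ⟨p * q, ?_⟩
  intro p' q' hp'1 hq'1 hpq' hMp' hMq' hdvd τ σ hτP hσP hτR hσR hτF hτD hσF hσD
  obtain ⟨k, hk⟩ := hdvd
  have hppos : 0 < p := hp
  have hqpos : 0 < q := hq
  have hp'pos : 0 < p' := hp'1
  have hq'pos : 0 < q' := hq'1
  have hkpos : 0 < k := by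
    rcases Nat.eq_zero_or_pos k with h | h
    · exfalso; rw [h, mul_zero] at hk; exact (Nat.mul_pos hp'pos hq'pos).ne' hk
    · exact h
  have hq'k : q' < k := by
    have h1 : p * q * q' < p' * q' := (Nat.mul_lt_mul_right hq'pos).mpr hMp'
    rw [hk] at h1
    exact Nat.lt_of_mul_lt_mul_left h1
  have hp'k : p' < k := by
    have h1 : p * q * p' < q' * p' := (Nat.mul_lt_mul_right hp'pos).mpr hMq'
    have h2 : q' * p' = p * q * k := by rw [← hk]; ring
    rw [h2] at h1
    exact Nat.lt_of_mul_lt_mul_left h1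
  obtain ⟨a, hak, ha1, ha2⟩ :=
    exists_split p q q' p' k hppos hqpos hq'pos hp'pos hpq hk.symm hq'k.le
  obtain ⟨b, hbk, hb1, hb2⟩ :=
    exists_split p q p' q' k hppos hqpos hp'pos hq'pos hpq (by rw [← hk]; ring) hp'k.le
  set i0 : Fin k := ⟨0, hkpos⟩ with hi0
  set c0 : Fin k → Bool := fun i => decide (a ≤ (i : ℕ)) with hc0
  set c1 : Fin k → Bool := fun i => decide (b ≤ (i : ℕ)) with hc1
  have hcard0F : Fintype.card {i // c0 i = false} = a := card_decide_false k a hak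
  have hcard0T : Fintype.card {i // c0 i = true} = k - a := card_decide_true k a hak
  have hcard1F : Fintype.card {i // c1 i = false} = b := card_decide_false k b hbk
  have hcard1T : Fintype.card {i // c1 i = true} = k - b := card_decide_true k b hbk
  obtain ⟨m0, hm0⟩ := ha1
  obtain ⟨n0, hn0⟩ := ha2
  obtain ⟨m1, hm1⟩ := hb1
  obtain ⟨n1, hn1⟩ := hb2
  have hp'eq : p * m0 + q * n0 = p' := by
    have h1 : (p * m0 + q * n0) * q' = p' * q' := by
      calc (p * m0 + q * n0) * q' = p * (q' * m0) + q * (q' * n0) := by ring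
      _ = p * (a * q) + q * ((k - a) * p) := by rw [← hm0, ← hn0]
      _ = p * q * (a + (k - a)) := by ring
      _ = p * q * k := by rw [Nat.add_sub_cancel' hak]
      _ = p' * q' := hk.symm
    exact Nat.eq_of_mul_eq_mul_right hq'pos h1
  have hq'eq : p * m1 + q * n1 = q' := by
    have h1 : (p * m1 + q * n1) * p' = q' * p' := by
      calc (p * m1 + q * n1) * p' = p * (p' * m1) + q * (p' * n1) := by ring
      _ = p * (b * q) + q * ((k - b) * p) := by rw [← hm1, ← hn1]
      _ = p * q * (b + (k - b)) := by ring
      _ = p * q * k := by rw [Nat.add_sub_cancel' hbk]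
      _ = q' * p' := by rw [← hk]; ring
    exact Nat.eq_of_mul_eq_mul_right hp'pos h1
  obtain ⟨Θ0, hΘ0⟩ := keyL p q p' q' k m0 n0 c0
    (by rw [hcard0F, mul_comm q a, hm0, mul_comm q' m0])
    (by rw [hcard0T, mul_comm p (k - a), hn0, mul_comm q' n0]) hp'eq
  obtain ⟨Θ1, hΘ1⟩ := keyR p q p' q' k m1 n1 c1
    (by rw [hcard1F, mul_comm q b, hm1, mul_comm p' m1])
    (by rw [hcard1T, mul_comm p (k - b), hn1, mul_comm p' n1]) hq'eq
  obtain ⟨γ, hγc, hγ0, hγ1, hγu⟩ := exists_path_perm (p' * q') (Θ0.trans Θ1.symm)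
  -- the path maps
  set ξ : Fin k → 𝕀 → 𝕀 := fun i => DD.xi σ τ hτF hτD (c0 i) (c1 i) with hξdef
  have hξc : ∀ i, Continuous (ξ i) := fun i => DD.xi_cont σ τ hσF hσD hτF hτD _ _
  have hξ0 : ∀ i, ξ i 0 = if c0 i then 1 else 0 := fun i => DD.xi_zero σ τ hσD hτF hτD _ _
  have hξ1 : ∀ i, ξ i 1 = if c1 i then 1 else 0 := fun i => DD.xi_one σ τ hτF hτD _ _
  have hξmap : ∀ i, Measure.map (ξ i) σ = τ := fun i => DD.map_xi σ τ hσF hσD hτF hτD _ _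
  have hξsurj : Function.Surjective (ξ i0) := DD.xi_surjective σ τ hσF hσD hτF hτD _ _
  -- block map
  set B : 𝔸 (p * q) → 𝕀 → Mat (p' * q') := fun f t =>
    (Matrix.blockDiagonal fun i => f (ξ i t)).submatrix ⇑Θ0 ⇑Θ0 with hBdef
  have hBc : ∀ f : 𝔸 (p * q), Continuous (B f) := fun f =>
    (Continuous.matrix_blockDiagonal (continuous_pi fun i =>
      (map_continuous f).comp (hξc i))).matrix_submatrix _ _
  have hγtc : Continuous fun t : 𝕀 => γ (t : ℝ) := hγc.comp continuous_subtype_val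
  have hΦc : ∀ f : 𝔸 (p * q), Continuous fun t : 𝕀 => γ ↑t * B f t * (γ ↑t)ᴴ := fun f =>
    (hγtc.matrix_mul (hBc f)).matrix_mul hγtc.matrix_conjTranspose
  have hconj_mul : ∀ (t : 𝕀) (X Y : Mat (p' * q')),
      (γ ↑t * X * (γ ↑t)ᴴ) * (γ ↑t * Y * (γ ↑t)ᴴ) = γ ↑t * (X * Y) * (γ ↑t)ᴴ := by
    intro t X Y
    have h := (hγu (↑t : ℝ)).2
    calc (γ ↑t * X * (γ ↑t)ᴴ) * (γ ↑t * Y * (γ ↑t)ᴴ)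
        = (γ ↑t * X) * ((γ ↑t)ᴴ * γ ↑t) * (Y * (γ ↑t)ᴴ) := by noncomm_ring
    _ = γ ↑t * (X * Y) * (γ ↑t)ᴴ := by rw [h, mul_one]; noncomm_ring
  have hcancel : ∀ (t : 𝕀) (X : Mat (p' * q')),
      (γ ↑t)ᴴ * (γ ↑t * X * (γ ↑t)ᴴ) * γ ↑t = X := by
    intro t X
    have h := (hγu (↑t : ℝ)).2
    calc (γ ↑t)ᴴ * (γ ↑t * X * (γ ↑t)ᴴ) * γ ↑t
        = ((γ ↑t)ᴴ * γ ↑t) * X * ((γ ↑t)ᴴ * γ ↑t) := by noncomm_ring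
    _ = X := by rw [h, one_mul, mul_one]
  have hBone : ∀ t, B 1 t = 1 := by
    intro t
    show (Matrix.blockDiagonal fun i => (1 : 𝔸 (p * q)) (ξ i t)).submatrix ⇑Θ0 ⇑Θ0 = 1
    simp only [ContinuousMap.one_apply]
    rw [show (fun _ : Fin k => (1 : Mat (p * q))) = (1 : Fin k → Mat (p * q)) from rfl,
      Matrix.blockDiagonal_one, Matrix.submatrix_one_equiv]
  have hBzero : ∀ t, B 0 t = 0 := by
    intro t
    show (Matrix.blockDiagonal fun i => (0 : 𝔸 (p * q)) (ξ i t)).submatrix ⇑Θ0 ⇑Θ0 = 0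
    simp only [ContinuousMap.zero_apply]
    rw [show (fun _ : Fin k => (0 : Mat (p * q))) = (0 : Fin k → Mat (p * q)) from rfl,
      Matrix.blockDiagonal_zero]
    rfl
  have hBmul : ∀ (f g : 𝔸 (p * q)) (t : 𝕀), B (f * g) t = B f t * B g t := by
    intro f g t
    show (Matrix.blockDiagonal fun i => (f * g) (ξ i t)).submatrix ⇑Θ0 ⇑Θ0 = _
    simp only [ContinuousMap.mul_apply]
    rw [show (fun i => f (ξ i t) * g (ξ i t))
        = (fun i => (fun j => f (ξ j t)) i * (fun j => g (ξ j t)) i) from rfl,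
      Matrix.blockDiagonal_mul]
    exact (Matrix.submatrix_mul_equiv _ _ _ Θ0 _).symm
  have hBadd : ∀ (f g : 𝔸 (p * q)) (t : 𝕀), B (f + g) t = B f t + B g t := by
    intro f g t
    show (Matrix.blockDiagonal fun i => (f + g) (ξ i t)).submatrix ⇑Θ0 ⇑Θ0 = _
    simp only [ContinuousMap.add_apply]
    rw [show (fun i => f (ξ i t) + g (ξ i t))
        = ((fun j => f (ξ j t)) + (fun j => g (ξ j t))) from rfl,
      Matrix.blockDiagonal_add]
    rfl
  have hBsmul : ∀ (z : ℂ) (f : 𝔸 (p * q)) (t : 𝕀), B (z • f) t = z • B f t := by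
    intro z f t
    show (Matrix.blockDiagonal fun i => (z • f) (ξ i t)).submatrix ⇑Θ0 ⇑Θ0 = _
    simp only [ContinuousMap.smul_apply]
    rw [show (fun i => z • f (ξ i t)) = (z • fun j => f (ξ j t)) from rfl,
      Matrix.blockDiagonal_smul]
    rfl
  have hBstar : ∀ (f : 𝔸 (p * q)) (t : 𝕀), B (star f) t = (B f t)ᴴ := by
    intro f t
    show (Matrix.blockDiagonal fun i => (star f) (ξ i t)).submatrix ⇑Θ0 ⇑Θ0 = _
    simp only [ContinuousMap.star_apply]
    show (Matrix.blockDiagonal fun i => (f (ξ i t))ᴴ).submatrix ⇑Θ0 ⇑Θ0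
      = ((Matrix.blockDiagonal fun j => f (ξ j t)).submatrix ⇑Θ0 ⇑Θ0)ᴴ
    rw [Matrix.conjTranspose_submatrix, Matrix.blockDiagonal_conjTranspose]
  -- the star algebra homomorphism on the ambient algebra
  set Φ : 𝔸 (p * q) →⋆ₐ[ℂ] 𝔸 (p' * q') :=
    { toFun := fun f => ⟨fun t => γ ↑t * B f t * (γ ↑t)ᴴ, hΦc f⟩
      map_one' := by
        refine ContinuousMap.ext fun t => ?_
        show γ ↑t * B 1 t * (γ ↑t)ᴴ = (1 : 𝔸 (p' * q')) t
        rw [hBone, mul_one, (hγu (↑t : ℝ)).1]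
        rfl
      map_mul' := fun f g => by
        refine ContinuousMap.ext fun t => ?_
        show γ ↑t * B (f * g) t * (γ ↑t)ᴴ
          = (γ ↑t * B f t * (γ ↑t)ᴴ) * (γ ↑t * B g t * (γ ↑t)ᴴ)
        rw [hconj_mul, hBmul]
      map_zero' := by
        refine ContinuousMap.ext fun t => ?_
        show γ ↑t * B 0 t * (γ ↑t)ᴴ = (0 : 𝔸 (p' * q')) t
        rw [hBzero, mul_zero, zero_mul]
        rfl
      map_add' := fun f g => by
        refine ContinuousMap.ext fun t => ?_
        show γ ↑t * B (f + g) t * (γ ↑t)ᴴ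
          = (γ ↑t * B f t * (γ ↑t)ᴴ) + (γ ↑t * B g t * (γ ↑t)ᴴ)
        rw [hBadd, mul_add, add_mul]
      commutes' := fun z => by
        refine ContinuousMap.ext fun t => ?_
        show γ ↑t * B (algebraMap ℂ (𝔸 (p * q)) z) t * (γ ↑t)ᴴ = algebraMap ℂ (𝔸 (p' * q')) z t
        rw [Algebra.algebraMap_eq_smul_one, hBsmul, hBone]
        have h2 : (algebraMap ℂ (𝔸 (p' * q')) z) t = z • (1 : Mat (p' * q')) := by
          rw [Algebra.algebraMap_eq_smul_one]
          rfl
        rw [h2, Matrix.mul_smul, Matrix.smul_mul, mul_one, (hγu (↑t : ℝ)).1]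
      map_star' := fun f => by
        refine ContinuousMap.ext fun t => ?_
        show γ ↑t * B (star f) t * (γ ↑t)ᴴ
          = star (⟨fun t => γ ↑t * B f t * (γ ↑t)ᴴ, hΦc f⟩ : 𝔸 (p' * q')) t
        rw [hBstar]
        show γ ↑t * (B f t)ᴴ * (γ ↑t)ᴴ = (γ ↑t * B f t * (γ ↑t)ᴴ)ᴴ
        rw [Matrix.conjTranspose_mul, Matrix.conjTranspose_mul,
          Matrix.conjTranspose_conjTranspose, mul_assoc] } with hΦdef
  have hΦapply : ∀ (f : 𝔸 (p * q)) (t : 𝕀), (Φ f) t = γ ↑t * B f t * (γ ↑t)ᴴ :=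
    fun f t => rfl
  -- membership
  have hmem : ∀ F : 𝔸 (p * q), F ∈ Zpq p q → Φ F ∈ Zpq p' q' := by
    intro F hF
    rw [Zpq, StarSubalgebra.mem_inf, StarSubalgebra.mem_comap, StarSubalgebra.mem_comap] at hF
    obtain ⟨hF0, hF1⟩ := hF
    obtain ⟨x, hx⟩ := hF0
    obtain ⟨y, hy⟩ := hF1
    have hx' : F 0 = lKronFun p q x := hx.symm
    have hy' : F 1 = rKronFun p q y := hy.symm
    have hblocks0 : (fun i => F (ξ i 0))
        = fun i => if c0 i then rKronFun p q y else lKronFun p q x := by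
      funext i
      rw [hξ0 i]
      cases hci : c0 i
      · simp only [hci, Bool.false_eq_true, if_false]
        exact hx'
      · simp only [hci, if_true]
        exact hy'
    have hblocks1 : (fun i => F (ξ i 1))
        = fun i => if c1 i then rKronFun p q y else lKronFun p q x := by
      funext i
      rw [hξ1 i]
      cases hci : c1 i
      · simp only [hci, Bool.false_eq_true, if_false]
        exact hx'
      · simp only [hci, if_true]
        exact hy'
    rw [Zpq, StarSubalgebra.mem_inf, StarSubalgebra.mem_comap, StarSubalgebra.mem_comap]
    constructor
    · obtain ⟨ρ, hρ⟩ := hΘ0 x y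
      refine ⟨ρ, ?_⟩
      show lKronFun p' q' ρ = (Φ F) 0
      rw [hΦapply]
      have hz : ((0 : 𝕀) : ℝ) = (0 : ℝ) := rfl
      rw [hz, hγ0, one_mul, Matrix.conjTranspose_one, mul_one]
      rw [hBdef]
      show lKronFun p' q' ρ
        = (Matrix.blockDiagonal fun i => F (ξ i 0)).submatrix ⇑Θ0 ⇑Θ0
      rw [hblocks0, hρ]
    · obtain ⟨ρ, hρ⟩ := hΘ1 x y
      refine ⟨ρ, ?_⟩
      show rKronFun p' q' ρ = (Φ F) 1
      rw [hΦapply]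
      have hz : ((1 : 𝕀) : ℝ) = (1 : ℝ) := rfl
      rw [hz, hγ1, permMat_conj]
      rw [hBdef]
      show rKronFun p' q' ρ
        = ((Matrix.blockDiagonal fun i => F (ξ i 1)).submatrix ⇑Θ0 ⇑Θ0).submatrix
            ⇑(Θ0.trans Θ1.symm).symm ⇑(Θ0.trans Θ1.symm).symm
      rw [hblocks1, Matrix.submatrix_submatrix]
      have hcomp : ⇑Θ0 ∘ ⇑(Θ0.trans Θ1.symm).symm = ⇑Θ1 := by
        funext v
        simp [Equiv.trans_apply]
      rw [hcomp, hρ]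
  set φ : ↥(Zpq p q) →⋆ₐ[ℂ] ↥(Zpq p' q') :=
    StarAlgHom.codRestrict (Φ.comp (StarSubalgebra.subtype (Zpq p q))) (Zpq p' q')
      (fun f => hmem ↑f f.2) with hφdef
  have hφval : ∀ f : ↥(Zpq p q), (↑(φ f) : 𝔸 (p' * q')) = Φ ↑f := fun f => rfl
  refine ⟨φ, ?_, ?_⟩
  · -- injectivity
    intro f g hfg
    have h0 : Φ ↑f = Φ ↑g := by
      rw [← hφval f, ← hφval g, hfg]
    apply Subtype.ext
    apply ContinuousMap.ext
    intro s
    obtain ⟨t, rfl⟩ := hξsurj s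
    have h1 : γ ↑t * B ↑f t * (γ ↑t)ᴴ = γ ↑t * B ↑g t * (γ ↑t)ᴴ := by
      rw [← hΦapply, ← hΦapply, h0]
    have hBt : B ↑f t = B ↑g t := by
      rw [← hcancel t (B ↑f t), h1, hcancel]
    have hBD : (Matrix.blockDiagonal fun i => (↑f : 𝔸 (p * q)) (ξ i t))
        = Matrix.blockDiagonal fun i => (↑g : 𝔸 (p * q)) (ξ i t) := by
      have h3 := congrArg (fun M => M.submatrix ⇑Θ0.symm ⇑Θ0.symm) hBt
      simp only [hBdef, Matrix.submatrix_submatrix] at h3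
      rwa [show ⇑Θ0 ∘ ⇑Θ0.symm = id from funext (Equiv.apply_symm_apply Θ0),
        Matrix.submatrix_id_id, Matrix.submatrix_id_id] at h3
    ext r r'
    have h4 := congrFun (congrFun hBD (r, i0)) (r', i0)
    simpa [Matrix.blockDiagonal_apply_eq] using h4
  · -- trace
    intro f
    rw [hφval f]
    unfold trInt
    have htr : ∀ t : 𝕀, ((Φ ↑f) t).trace
        = ∑ i : Fin k, ((↑f : 𝔸 (p * q)) (ξ i t)).trace := by
      intro t
      rw [hΦapply]
      rw [Matrix.trace_mul_cycle]
      rw [show (γ ↑t)ᴴ * γ ↑t * B ↑f t = ((γ ↑t)ᴴ * γ ↑t) * B ↑f t from rfl,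
        (hγu (↑t : ℝ)).2, one_mul]
      rw [hBdef]
      show ((Matrix.blockDiagonal fun i => (↑f : 𝔸 (p * q)) (ξ i t)).submatrix ⇑Θ0 ⇑Θ0).trace = _
      rw [trace_submatrix_equiv, Matrix.trace_blockDiagonal]
    have hint : ∀ i : Fin k, Integrable
        (fun t => ((↑f : 𝔸 (p * q)) (ξ i t)).trace / ((p' * q' : ℕ) : ℂ)) σ := by
      intro i
      apply Continuous.integrable_of_hasCompactSupport
      · exact (((map_continuous (↑f : 𝔸 (p * q))).comp (hξc i)).matrix_trace).div_const _
      · exact HasCompactSupport.of_compactSpace _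
    calc ∫ t, ((Φ ↑f) t).trace / ((p' * q' : ℕ) : ℂ) ∂σ
        = ∫ t, ∑ i : Fin k,
            ((↑f : 𝔸 (p * q)) (ξ i t)).trace / ((p' * q' : ℕ) : ℂ) ∂σ := by
          congr 1
          funext t
          rw [htr, Finset.sum_div]
    _ = ∑ i : Fin k, ∫ t,
            ((↑f : 𝔸 (p * q)) (ξ i t)).trace / ((p' * q' : ℕ) : ℂ) ∂σ := by
          exact integral_finset_sum _ (fun i _ => hint i)
    _ = ∑ _i : Fin k, ∫ s,
            ((↑f : 𝔸 (p * q)) s).trace / ((p' * q' : ℕ) : ℂ) ∂τ := by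
          apply Finset.sum_congr rfl
          intro i _
          rw [← hξmap i, integral_map (hξc i).aemeasurable]
          exact ((map_continuous (↑f : 𝔸 (p * q))).matrix_trace.div_const _).aestronglyMeasurable
    _ = (k : ℂ) * ∫ s, ((↑f : 𝔸 (p * q)) s).trace / ((p' * q' : ℕ) : ℂ) ∂τ := by
          rw [Finset.sum_const, Finset.card_univ, Fintype.card_fin, nsmul_eq_mul]
    _ = ∫ s, ((↑f : 𝔸 (p * q)) s).trace / ((p * q : ℕ) : ℂ) ∂τ := by
          rw [← integral_const_mul]
          congr 1
          funext s
          have hNc : ((p' * q' : ℕ) : ℂ) = ((p * q : ℕ) : ℂ) * (k : ℂ) := by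
            rw [hk]; push_cast; ring
          have hk0 : (k : ℂ) ≠ 0 := Nat.cast_ne_zero.mpr hkpos.ne'
          have hpq0 : ((p * q : ℕ) : ℂ) ≠ 0 :=
            Nat.cast_ne_zero.mpr (Nat.mul_pos hppos hqpos).ne'
          rw [hNc]
          field_simp
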